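/- Let E be a divisible effect algebra with compression base (J_p)_{p∈P}, and let (G, u) be its universal group with the uniquely extended compression base (J̃_p)_{p∈P}. If E has the b-comparability property, then G has general comparability. Conversely, if E is archimedean and G has general comparability, then E has the b-comparability property. -/

import Mathlib

/- Common definitions: effect algebras, compression bases, spectrality -/

attribute [local instance 0] Classical.propDecidable

universe u

structure EffectAlgebra (E : Type u) where
  padd : E → E → Option E
  zero : E
  one : E
  comm : ∀ a b, padd a b = padd b a
  assoc : ∀ a b c ab abc, padd a b = some ab → padd ab c = some abc →
      ∃ bc, padd b c = some bc ∧ padd a bc = some abc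
  orth_exists : ∀ a, ∃ x, padd a x = some one
  orth_unique : ∀ a x y, padd a x = some one → padd a y = some one → x = y
  add_one : ∀ a b, padd a one = some b → a = zero

namespace EffectAlgebra

variable {E : Type u} (EA : EffectAlgebra E)

/-- `a ⊥ b` and `a ⊕ b = c`. -/
def le (a b : E) : Prop := ∃ c, EA.padd a c = some b

/-- the orthosupplement `a'`. -/
noncomputable def compl (a : E) : E := (EA.orth_exists a).choose

/-- `b ⊖ a` (the element `c` with `a ⊕ c = b`, when it exists). -/
noncomputable def osub (b a : E) : E :=
  if h : ∃ c, EA.padd a c = some b then h.choose else EA.zero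

/-- the value of `a ⊕ b` (defaulting to `0` when undefined). -/
noncomputable def oplusD (a b : E) : E := (EA.padd a b).getD EA.zero

def IsSharp (a : E) : Prop := ∀ x, EA.le x a → EA.le x (EA.compl a) → x = EA.zero

/-- sub-effect algebra. -/
def SubEA (P : Set E) : Prop :=
  EA.zero ∈ P ∧ EA.one ∈ P ∧ (∀ a ∈ P, EA.compl a ∈ P) ∧
    ∀ a ∈ P, ∀ b ∈ P, ∀ c, EA.padd a b = some c → c ∈ P

/-- Mackey compatibility: `a = a₁ ⊕ c`, `b = b₁ ⊕ c` with `a₁ ⊕ b₁ ⊕ c` defined. -/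
def Mackey (a b : E) : Prop :=
  ∃ a1 b1 c d e, EA.padd a1 b1 = some d ∧ EA.padd d c = some e ∧
    EA.padd a1 c = some a ∧ EA.padd b1 c = some b

def Additive (J : E → E) : Prop :=
  ∀ a b c, EA.padd a b = some c → EA.padd (J a) (J b) = some (J c)

def Retraction (J : E → E) : Prop :=
  EA.Additive J ∧ ∀ a, EA.le a (J EA.one) → J a = a

def Compression (J : E → E) : Prop :=
  EA.Retraction J ∧ ∀ a, (J a = EA.zero ↔ EA.le a (EA.compl (J EA.one)))

/-- `I` is a supplement of `J`: `Ker J = ran I` and `Ker I = ran J`. -/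
def Supplement (I J : E → E) : Prop :=
  (∀ a, J a = EA.zero ↔ ∃ b, I b = a) ∧ (∀ a, I a = EA.zero ↔ ∃ b, J b = a)

/-- the `n`-fold sum `n·a`, when defined. -/
def nsmulE : ℕ → E → Option E
  | 0, _ => some EA.zero
  | n + 1, a => (nsmulE n a).bind fun b => EA.padd a b

def ArchimedeanEA : Prop :=
  ∀ a : E, (∀ n : ℕ, ∃ b, EA.nsmulE n a = some b) → a = EA.zero

/-- a state on an effect algebra. -/
def IsState (s : E → ℝ) : Prop :=
  s EA.one = 1 ∧ (∀ a, 0 ≤ s a ∧ s a ≤ 1) ∧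
    ∀ a b c, EA.padd a b = some c → s c = s a + s b

noncomputable def partialSum (f : ℕ → E) : ℕ → E
  | 0 => EA.zero
  | n + 1 => EA.oplusD (partialSum f n) (f n)

/-- σ-additivity of a state: if all partial sums of an orthogonal sequence are defined
and the orthosum (= supremum of the partial sums) exists, the state is countably additive. -/
def SigmaAdditive (s : E → ℝ) : Prop :=
  ∀ f : ℕ → E, ∀ b : E,
    (∀ n, ∃ c, EA.padd (EA.partialSum f n) (f n) = some c) →
    (∀ n, EA.le (EA.partialSum f n) b) →
    (∀ c, (∀ n, EA.le (EA.partialSum f n) c) → EA.le b c) →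
    Filter.Tendsto (fun n => ∑ i ∈ Finset.range n, s (f i)) Filter.atTop (nhds (s b))

/-- A compression base: a family of compressions indexed by a sub-effect algebra `P`
such that each `p ∈ P` is the focus of `J p`, and Mackey compatible projections
compose to a projection. -/
structure CompressionBase {E : Type u} (EA : EffectAlgebra E) where
  P : Set E
  J : E → E → E
  sub : EA.SubEA P
  compr : ∀ p ∈ P, EA.Compression (J p)
  focus : ∀ p ∈ P, J p EA.one = p
  mackey : ∀ p ∈ P, ∀ q ∈ P, EA.Mackey p q → ∃ r ∈ P, J p ∘ J q = J r

variable (CB : CompressionBase EA)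

/-- `a ∈ C(p)`:  `a = J_p(a) ⊕ J_{p'}(a)`. -/
def inC (a p : E) : Prop :=
  EA.padd (CB.J p a) (CB.J (EA.compl p) a) = some a

/-- `PC(a) = {p ∈ P : a ∈ C(p)}`. -/
def PC (a : E) : Set E := {p | p ∈ CB.P ∧ inC EA CB a p}

/-- the bicommutant `P(a)`. -/
def bicomm (a : E) : Set E :=
  {p | p ∈ PC EA CB a ∧ ∀ q ∈ PC EA CB a, inC EA CB p q}

/-- `PC(A)` for a set `A ⊆ E`. -/
def PCset (A : Set E) : Set E := {p | p ∈ CB.P ∧ ∀ a ∈ A, inC EA CB a p}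

/-- `P(Q) = PC(PC(Q) ∪ Q)`. -/
def Pset (Q : Set E) : Set E := PCset EA CB (PCset EA CB Q ∪ Q)

/-- `P_≤(e,f)`. -/
def Ple (e f : E) : Set E :=
  {p | p ∈ Pset EA CB {e, f} ∧ EA.le (CB.J p e) (CB.J p f) ∧
    EA.le (CB.J (EA.compl p) f) (CB.J (EA.compl p) e)}

/-- a Boolean subalgebra of `P`: a sub-effect algebra of `E` contained in `P`
whose elements are pairwise Mackey compatible, with witnesses inside. -/
def BooleanSub (B : Set E) : Prop :=
  B ⊆ CB.P ∧ EA.SubEA B ∧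
    ∀ p ∈ B, ∀ q ∈ B, ∃ p1 ∈ B, ∃ q1 ∈ B, ∃ c ∈ B, ∃ d e,
      EA.padd p1 q1 = some d ∧ EA.padd d c = some e ∧
      EA.padd p1 c = some p ∧ EA.padd q1 c = some q

/-- `a` is a b-element with associated Boolean subalgebra `B`. -/
def IsBElementWith (a : E) (B : Set E) : Prop :=
  BooleanSub EA CB B ∧ ∀ p ∈ CB.P, (inC EA CB a p ↔ ∀ b ∈ B, inC EA CB b p)

def IsBElement (a : E) : Prop := ∃ B, IsBElementWith EA CB a B

def BProperty : Prop := ∀ a : E, IsBElement EA CB a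

/-- commuting of b-elements: `e C f` iff `P(e) ↔ P(f)`. -/
def CommuteEl (e f : E) : Prop :=
  ∀ p ∈ bicomm EA CB e, ∀ q ∈ bicomm EA CB f, EA.Mackey p q

def BComparability : Prop :=
  BProperty EA CB ∧ ∀ e f : E, CommuteEl EA CB e f → (Ple EA CB e f).Nonempty

def IsProjCover (a p : E) : Prop :=
  p ∈ CB.P ∧ ∀ q ∈ CB.P, (EA.le a q ↔ EA.le p q)

def ProjCoverProp : Prop := ∀ a : E, ∃ p, IsProjCover EA CB a p

def Spectral : Prop := ProjCoverProp EA CB ∧ BComparability EA CB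

/-- a block of `P`: a maximal set of pairwise Mackey compatible projections. -/
def IsBlock (B : Set E) : Prop :=
  B ⊆ CB.P ∧ (∀ p ∈ B, ∀ q ∈ B, EA.Mackey p q) ∧
    ∀ B' : Set E, B' ⊆ CB.P → (∀ p ∈ B', ∀ q ∈ B', EA.Mackey p q) → B ⊆ B' → B' = B

/-- the C-block `C(B)`. -/
def Cblock (B : Set E) : Set E := {a | ∀ p ∈ B, inC EA CB a p}

/-- `(f − e)_+` (the positive part, defined when `P_≤(e,f)` is nonempty). -/
noncomputable def posPart (e f : E) : E :=
  if h : (Ple EA CB e f).Nonempty then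
    EA.osub (CB.J h.some f) (CB.J h.some e)
  else EA.zero

noncomputable def projCover (a : E) : E :=
  if h : ∃ p, IsProjCover EA CB a p then h.choose else EA.zero

def IsMeetP (p q m : E) : Prop :=
  m ∈ CB.P ∧ EA.le m p ∧ EA.le m q ∧ ∀ s ∈ CB.P, EA.le s p → EA.le s q → EA.le s m

/-- `p ∧ q` in `P`. -/
noncomputable def pmeet (p q : E) : E :=
  if h : ∃ m, IsMeetP EA CB p q m then h.choose else EA.zero

/-- infimum of a set of projections in `P`. -/
def IsInfP (S : Set E) (m : E) : Prop :=
  m ∈ CB.P ∧ (∀ s ∈ S, EA.le m s) ∧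
    ∀ t ∈ CB.P, (∀ s ∈ S, EA.le t s) → EA.le t m

/-! Relative (to a projection `q`, i.e. computed in the interval `[0,q]`) notions. -/

def Pq (q : E) : Set E := {p | p ∈ CB.P ∧ EA.le p q}

def inCq (q a p : E) : Prop :=
  EA.padd (CB.J p a) (CB.J (EA.osub q p) a) = some a

def PCq (q a : E) : Set E := {p | p ∈ Pq EA CB q ∧ inCq EA CB q a p}

def bicommq (q a : E) : Set E :=
  {p | p ∈ PCq EA CB q a ∧ ∀ r ∈ PCq EA CB q a, inCq EA CB q p r}

def PCsetq (q : E) (A : Set E) : Set E :=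
  {p | p ∈ Pq EA CB q ∧ ∀ a ∈ A, inCq EA CB q a p}

def Psetq (q : E) (Q : Set E) : Set E := PCsetq EA CB q (PCsetq EA CB q Q ∪ Q)

def Pleq (q e f : E) : Set E :=
  {p | p ∈ Psetq EA CB q {e, f} ∧ EA.le (CB.J p e) (CB.J p f) ∧
    EA.le (CB.J (EA.osub q p) f) (CB.J (EA.osub q p) e)}

noncomputable def posPartq (q e f : E) : E :=
  if h : (Pleq EA CB q e f).Nonempty then
    EA.osub (CB.J h.some f) (CB.J h.some e)
  else EA.zero

def IsProjCoverq (q a p : E) : Prop :=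
  p ∈ Pq EA CB q ∧ ∀ s ∈ Pq EA CB q, (EA.le a s ↔ EA.le p s)

noncomputable def projCoverq (q a : E) : E :=
  if h : ∃ p, IsProjCoverq EA CB q a p then h.choose else EA.zero

def Mackeyq (q a b : E) : Prop :=
  ∃ a1 b1 c d e, EA.padd a1 b1 = some d ∧ EA.padd d c = some e ∧ EA.le e q ∧
    EA.padd a1 c = some a ∧ EA.padd b1 c = some b

def SubEAq (q : E) (F : Set E) : Prop :=
  EA.zero ∈ F ∧ q ∈ F ∧ (∀ x ∈ F, EA.osub q x ∈ F) ∧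
    ∀ x ∈ F, ∀ y ∈ F, ∀ z, EA.padd x y = some z → EA.le z q → z ∈ F

def BooleanSubq (q : E) (B : Set E) : Prop :=
  B ⊆ Pq EA CB q ∧ SubEAq EA q B ∧
    ∀ p ∈ B, ∀ r ∈ B, ∃ p1 ∈ B, ∃ r1 ∈ B, ∃ c ∈ B, ∃ d e,
      EA.padd p1 r1 = some d ∧ EA.padd d c = some e ∧ EA.le e q ∧
      EA.padd p1 c = some p ∧ EA.padd r1 c = some r

def IsBElementq (q a : E) : Prop :=
  ∃ B, BooleanSubq EA CB q B ∧
    ∀ p ∈ Pq EA CB q, (inCq EA CB q a p ↔ ∀ b ∈ B, inCq EA CB q b p)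

def BPropertyq (q : E) : Prop := ∀ a : E, EA.le a q → IsBElementq EA CB q a

def CommuteElq (q e f : E) : Prop :=
  ∀ p ∈ bicommq EA CB q e, ∀ r ∈ bicommq EA CB q f, Mackeyq EA q p r

def BComparabilityq (q : E) : Prop :=
  BPropertyq EA CB q ∧ ∀ e f : E, EA.le e q → EA.le f q →
    CommuteElq EA CB q e f → (Pleq EA CB q e f).Nonempty

/-! The binary spectral resolution. -/

/-- `λ(w) = Σ_j w_j 2^{-j}` (head of the list is the first digit). -/
def lamOf : List Bool → ℚ
  | [] => 0
  | b :: t => ((if b then 1 else 0) + lamOf t) / 2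

/-- all binary strings of length `n`, in lexicographic order. -/
def allStrings : ℕ → List (List Bool)
  | 0 => [[]]
  | n + 1 => (allStrings n).flatMap fun w => [w ++ [false], w ++ [true]]

noncomputable def listSum (l : List E) : E :=
  l.foldl (fun acc x => EA.oplusD acc x) EA.zero

/-- the families `(u_w, c_w)`; the binary string is given in reversed order
(head of the list is the last digit). -/
noncomputable def ucAux (a : E) : List Bool → E × E
  | [] => (projCover EA CB a, a)
  | bit :: t =>
      let p := ucAux a t
      let q := p.1
      let cw := p.2
      let cw' := EA.osub q cw
      let d := posPartq EA CB q cw' cw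
      let u0 := pmeet EA CB (EA.osub q (projCoverq EA CB q d)) q
      if bit then (pmeet EA CB q (EA.compl u0), d)
      else (u0, EA.oplusD (CB.J u0 cw) (CB.J u0 cw))

noncomputable def uw (a : E) (w : List Bool) : E := (ucAux EA CB a w.reverse).1

noncomputable def cw (a : E) (w : List Bool) : E := (ucAux EA CB a w.reverse).2

/-- the binary spectral projection `p_{a,λ(w1)}`. -/
noncomputable def pbin (a : E) (w : List Bool) : E :=
  listSum EA (EA.compl (projCover EA CB a) ::
    (((allStrings (w.length + 1)).filter
        fun v => lamOf v ≤ lamOf (w ++ [false])).map (uw EA CB a)))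

def Dyadic01 (x : ℚ) : Prop := ∃ n k : ℕ, (k : ℚ) ≤ 2 ^ n ∧ x = (k : ℚ) / 2 ^ n

/-- the binary spectral resolution `p_{a,λ}`, for dyadic rationals `λ ∈ [0,1]`. -/
noncomputable def pdyad (a : E) (x : ℚ) : E :=
  if x ≤ 0 then EA.compl (projCover EA CB a)
  else if 1 ≤ x then EA.one
  else if h : ∃ w : List Bool, lamOf (w ++ [true]) = x then pbin EA CB a h.choose
  else EA.zero

/-- the rational spectral resolution `p_{a,λ} = ⋀_{μ > λ, μ dyadic} p_{a,μ}`. -/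
noncomputable def ratRes (a : E) (x : ℚ) : E :=
  if h : ∃ m, IsInfP EA CB {y | ∃ μ, Dyadic01 μ ∧ x < μ ∧ y = pdyad EA CB a μ} m
  then h.choose else EA.zero

/-- the partial maps `f_0(b) = 2b`, `f_1(b) = (2b')'` computed in `[0,uu]`. -/
noncomputable def fstep (uu b : E) (bit : Bool) : Option E :=
  if bit then
    (if EA.le (EA.osub uu b) b
      then some (EA.osub uu (EA.oplusD (EA.osub uu b) (EA.osub uu b))) else none)
  else
    (if EA.le b (EA.osub uu b) then some (EA.oplusD b b) else none)

/-- `f_w = f_{w_n} ∘ ⋯ ∘ f_{w_1}`, computed in `[0,uu]`, as a partial map. -/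
noncomputable def fword (uu : E) (w : List Bool) (b : E) : Option E :=
  w.foldl (fun ob bit => ob.bind fun x => fstep EA uu x bit) (some b)

end EffectAlgebra

namespace EffectAlgebra

/-- `u` is an order unit of the partially ordered abelian group `G`. -/
def OrderUnit {G : Type u} [AddCommGroup G] [PartialOrder G] (unit : G) : Prop :=
  0 ≤ unit ∧ ∀ g : G, ∃ n : ℕ, g ≤ n • unit

/-- the Riesz interpolation property. -/
def RieszInterp (G : Type u) [AddCommGroup G] [PartialOrder G] : Prop :=
  ∀ a b c d : G, a ≤ c → a ≤ d → b ≤ c → b ≤ d → ∃ x, a ≤ x ∧ b ≤ x ∧ x ≤ c ∧ x ≤ d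

/-- `p ∈ [0,u]` is sharp: `p ∧ (u − p) = 0`. -/
def SharpG {G : Type u} [AddCommGroup G] [PartialOrder G] (unit p : G) : Prop :=
  0 ≤ p ∧ p ≤ unit ∧ ∀ x : G, 0 ≤ x → x ≤ p → x ≤ unit - p → x = 0

/-- membership in the convex subgroup `G_p` generated by `p`. -/
def inGp {G : Type u} [AddCommGroup G] [PartialOrder G] (p g : G) : Prop :=
  ∃ n : ℕ, -(n • p) ≤ g ∧ g ≤ n • p

/-- `U` is the projection `Ũ_p` of `G` onto `G_p` with kernel `G_{p'}`. -/
def IsIdealProj {G : Type u} [AddCommGroup G] [PartialOrder G]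
    (unit p : G) (U : G → G) : Prop :=
  (∀ x y, U (x + y) = U x + U y) ∧ (∀ x y : G, x ≤ y → U x ≤ U y) ∧
    (∀ g, inGp p (U g)) ∧ (∀ g, inGp (unit - p) (g - U g)) ∧
    (∀ g, inGp p g → U g = g)

end EffectAlgebra

namespace EffectAlgebra

variable {E : Type u} {G : Type u} [AddCommGroup G] [PartialOrder G]

/-- `g ∈ C(p)` in the group `G` with the extended compression base `Jt`. -/
def inCG (EA : EffectAlgebra E) (Jt : E → G → G) (g : G) (p : E) : Prop :=
  g = Jt p g + Jt (EA.compl p) g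

def PCG (EA : EffectAlgebra E) (CB : CompressionBase EA) (Jt : E → G → G)
    (g : G) : Set E :=
  {p | p ∈ CB.P ∧ inCG EA Jt g p}

/-- the bicommutant `P(g)` of `g ∈ G`. -/
def bicommG (EA : EffectAlgebra E) (CB : CompressionBase EA) (Jt : E → G → G)
    (φ : E → G) (g : G) : Set E :=
  {p | p ∈ PCG EA CB Jt g ∧ ∀ q ∈ PCG EA CB Jt g, inCG EA Jt (φ p) q}

/-- general comparability of `(G,u)` with the extended compression base `Jt`. -/
def GenCompG (EA : EffectAlgebra E) (CB : CompressionBase EA) (Jt : E → G → G)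
    (φ : E → G) : Prop :=
  ∀ g : G, ∃ p ∈ bicommG EA CB Jt φ g, Jt (EA.compl p) g ≤ 0 ∧ 0 ≤ Jt p g

/-- `rick` is a Rickart mapping for `(G,u)` with the compression base `Jt`. -/
def RickartMapG (EA : EffectAlgebra E) (CB : CompressionBase EA) (Jt : E → G → G)
    (rick : G → E) : Prop :=
  ∀ g : G, rick g ∈ CB.P ∧ ∀ p ∈ CB.P,
    (EA.le p (rick g) ↔ (inCG EA Jt g p ∧ Jt p g = 0))

end EffectAlgebra


/-! ### Auxiliary infrastructure for the proof -/

namespace S17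
open EffectAlgebra
set_option linter.unusedSectionVars false

structure Ctx (E G : Type u) [AddCommGroup G] [PartialOrder G]
    [CovariantClass G G (· + ·) (· ≤ ·)] where
  EA : EffectAlgebra E
  CB : CompressionBase EA
  hdiv : ∀ a : E, ∀ n : ℕ, 0 < n → ∃! x : E, EA.nsmulE n x = some a
  u : G
  hu : OrderUnit u
  φ : E → G
  hφ1 : φ EA.one = u
  hmem : ∀ a : E, 0 ≤ φ a ∧ φ a ≤ u
  hinj : Function.Injective φ
  hsurj : ∀ g : G, 0 ≤ g → g ≤ u → ∃ a : E, φ a = g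
  hpadd : ∀ a b c : E, (EA.padd a b = some c ↔ φ a + φ b ≤ u ∧ φ c = φ a + φ b)
  huniv : ∀ (H : Type u) [AddCommGroup H], ∀ ψ : E → H,
      (∀ a b c : E, EA.padd a b = some c → ψ c = ψ a + ψ b) →
      ∃! h : G → H, (∀ x y : G, h (x + y) = h x + h y) ∧ ∀ a : E, h (φ a) = ψ a
  Jt : E → G → G
  hJt : ∀ p ∈ CB.P, (∀ x y : G, Jt p (x + y) = Jt p x + Jt p y) ∧
      (∀ x y : G, x ≤ y → Jt p x ≤ Jt p y) ∧ ∀ a : E, Jt p (φ a) = φ (CB.J p a)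

variable {E G : Type u} [AddCommGroup G] [PartialOrder G]
  [CovariantClass G G (· + ·) (· ≤ ·)]

/-- the ordered group structure on `G`. -/
def og (G : Type u) [AddCommGroup G] [PartialOrder G]
    [CovariantClass G G (· + ·) (· ≤ ·)] : IsOrderedAddMonoid G :=
  { add_le_add_left := fun a b h c => by
      rw [add_comm a, add_comm b]; exact CovariantClass.elim c h }

namespace Ctx

variable (S : Ctx E G)

lemma compl_padd (a : E) : S.EA.padd a (S.EA.compl a) = some S.EA.one :=
  (S.EA.orth_exists a).choose_spec

lemma phi_nonneg (a : E) : 0 ≤ S.φ a := (S.hmem a).1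
lemma phi_le_u (a : E) : S.φ a ≤ S.u := (S.hmem a).2

lemma phi_compl (a : E) : S.φ (S.EA.compl a) = S.u - S.φ a := by
  have h := ((S.hpadd a (S.EA.compl a) S.EA.one).mp (S.compl_padd a)).2
  rw [S.hφ1] at h
  rw [eq_sub_iff_add_eq, add_comm, ← h]

lemma phi_zero : S.φ S.EA.zero = 0 := by
  have h1 := S.compl_padd S.EA.one
  rw [S.EA.comm] at h1
  have h2 := S.EA.add_one _ _ h1
  rw [← h2, S.phi_compl, S.hφ1, sub_self]

lemma padd_zero (a : E) : S.EA.padd a S.EA.zero = some a :=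
  (S.hpadd a S.EA.zero a).mpr ⟨by rw [S.phi_zero, add_zero]; exact S.phi_le_u a,
    by rw [S.phi_zero, add_zero]⟩

lemma zero_padd (a : E) : S.EA.padd S.EA.zero a = some a := by
  rw [S.EA.comm]; exact S.padd_zero a

lemma le_iff {a b : E} : S.EA.le a b ↔ S.φ a ≤ S.φ b := by
  constructor
  · rintro ⟨c, hc⟩
    have h := ((S.hpadd a c b).mp hc).2
    calc S.φ a = S.φ a + 0 := (add_zero _).symm
      _ ≤ S.φ a + S.φ c := add_le_add_right (S.phi_nonneg c) _
      _ = S.φ b := h.symm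
  · intro h
    letI := og G
    obtain ⟨c, hc⟩ := S.hsurj (S.φ b - S.φ a) (by simpa using h)
      (le_trans (by simpa using S.phi_nonneg a) (S.phi_le_u b))
    exact ⟨c, (S.hpadd a c b).mpr ⟨by rw [hc]; simpa using S.phi_le_u b,
      by rw [hc]; abel⟩⟩

lemma le_one (a : E) : S.EA.le a S.EA.one :=
  S.le_iff.mpr (by rw [S.hφ1]; exact S.phi_le_u a)

lemma le_refl' (a : E) : S.EA.le a a := ⟨S.EA.zero, S.padd_zero a⟩

lemma compl_compl (a : E) : S.EA.compl (S.EA.compl a) = a :=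
  S.hinj (by rw [S.phi_compl, S.phi_compl]; abel)

lemma compl_zero : S.EA.compl S.EA.zero = S.EA.one :=
  S.hinj (by rw [S.phi_compl, S.phi_zero, sub_zero, S.hφ1])

lemma compl_one : S.EA.compl S.EA.one = S.EA.zero :=
  S.hinj (by rw [S.phi_compl, S.phi_zero, S.hφ1, sub_self])

lemma nsmulE_phi : ∀ {n : ℕ} {t b : E}, S.EA.nsmulE n t = some b →
    S.φ b = n • S.φ t := by
  intro n
  induction n with
  | zero => intro t b h
            simp only [EffectAlgebra.nsmulE] at h
            cases h
            simp [S.phi_zero]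
  | succ n ih =>
      intro t b h
      simp only [EffectAlgebra.nsmulE] at h
      rw [Option.bind_eq_some_iff] at h
      obtain ⟨c, hc, hp⟩ := h
      have h2 := ((S.hpadd t c b).mp hp).2
      rw [h2, ih hc, succ_nsmul, add_comm]

lemma nsmulE_defined {n : ℕ} {t : E} (h : n • S.φ t ≤ S.u) :
    ∃ b, S.EA.nsmulE n t = some b ∧ S.φ b = n • S.φ t := by
  letI := og G
  induction n with
  | zero => exact ⟨S.EA.zero, rfl, by simp [S.phi_zero]⟩
  | succ n ih =>
      have hn : n • S.φ t ≤ S.u :=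
        le_trans (nsmul_le_nsmul_left (S.phi_nonneg t) (Nat.le_succ n)) h
      obtain ⟨c, hc, hφc⟩ := ih hn
      obtain ⟨b, hb⟩ := S.hsurj ((n+1) • S.φ t) (nsmul_nonneg (S.phi_nonneg t) _) h
      refine ⟨b, ?_, hb⟩
      simp only [EffectAlgebra.nsmulE]
      rw [hc, Option.bind_some]
      exact (S.hpadd t c b).mpr ⟨by rw [hφc, ← succ_nsmul']; exact h,
        by rw [hb, hφc, ← succ_nsmul']⟩

/-- division by `n` in `E`. -/
noncomputable def dv (n : ℕ) (a : E) : E :=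
  if h : 0 < n then (S.hdiv a n h).choose else a

lemma dv_spec {n : ℕ} (hn : 0 < n) (a : E) :
    S.EA.nsmulE n (S.dv n a) = some a := by
  rw [dv, dif_pos hn]; exact (S.hdiv a n hn).choose_spec.1

lemma dv_unique {n : ℕ} (hn : 0 < n) {a x : E}
    (h : S.EA.nsmulE n x = some a) : x = S.dv n a := by
  rw [dv, dif_pos hn]; exact (S.hdiv a n hn).choose_spec.2 x h

lemma phi_dv {n : ℕ} (hn : 0 < n) (a : E) :
    n • S.φ (S.dv n a) = S.φ a := (S.nsmulE_phi (S.dv_spec hn a)).symm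

lemma dv_padd {n : ℕ} (hn : 0 < n) {a b c : E} (h : S.EA.padd a b = some c) :
    S.EA.padd (S.dv n a) (S.dv n b) = some (S.dv n c) := by
  letI := og G
  set x := S.φ (S.dv n a) with hx
  set y := S.φ (S.dv n b) with hy
  have hxy : n • (x + y) = S.φ c := by
    rw [smul_add, hx, hy, S.phi_dv hn, S.phi_dv hn, ((S.hpadd a b c).mp h).2]
  have h0 : (0:G) ≤ x + y := add_nonneg (S.phi_nonneg _) (S.phi_nonneg _)
  have hle : x + y ≤ S.u := by
    calc x + y = 1 • (x + y) := (one_nsmul _).symm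
      _ ≤ n • (x + y) := nsmul_le_nsmul_left h0 hn
      _ = S.φ c := hxy
      _ ≤ S.u := S.phi_le_u c
  obtain ⟨t, ht⟩ := S.hsurj (x + y) h0 hle
  have hdef : n • S.φ t ≤ S.u := by rw [ht, hxy]; exact S.phi_le_u c
  obtain ⟨b', hb', hφb'⟩ := S.nsmulE_defined hdef
  have hb'c : b' = c := S.hinj (by rw [hφb', ht, hxy])
  rw [hb'c] at hb'
  have htc : t = S.dv n c := S.dv_unique hn hb'
  rw [← htc]
  exact (S.hpadd _ _ t).mpr ⟨hle, ht⟩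

lemma ext_add {H : Type u} [AddCommGroup H] {h₁ h₂ : G → H}
    (a₁ : ∀ x y, h₁ (x + y) = h₁ x + h₁ y) (a₂ : ∀ x y, h₂ (x + y) = h₂ x + h₂ y)
    (hE : ∀ a, h₁ (S.φ a) = h₂ (S.φ a)) : h₁ = h₂ := by
  have hψ : ∀ a b c : E, S.EA.padd a b = some c → h₁ (S.φ c) = h₁ (S.φ a) + h₁ (S.φ b) := by
    intro a b c h
    rw [((S.hpadd a b c).mp h).2, a₁]
  exact ((S.huniv H (fun a => h₁ (S.φ a)) hψ).unique ⟨a₁, fun _ => rfl⟩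
    ⟨a₂, fun a => (hE a).symm⟩)

lemma addmap_zero {H : Type u} [AddCommGroup H] {h : G → H}
    (ha : ∀ x y, h (x + y) = h x + h y) : h 0 = 0 := by
  have := ha 0 0
  rw [add_zero] at this
  exact (add_eq_right.mp this.symm)

lemma addmap_nsmul {H : Type u} [AddCommGroup H] {h : G → H}
    (ha : ∀ x y, h (x + y) = h x + h y) (n : ℕ) (x : G) : h (n • x) = n • h x := by
  induction n with
  | zero => simpa using addmap_zero ha
  | succ n ih => rw [succ_nsmul, succ_nsmul, ha, ih]

lemma addmap_neg {H : Type u} [AddCommGroup H] {h : G → H}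
    (ha : ∀ x y, h (x + y) = h x + h y) (x : G) : h (-x) = - h x := by
  have := ha x (-x)
  rw [add_neg_cancel] at this
  rw [addmap_zero ha] at this
  exact (neg_eq_of_add_eq_zero_right this.symm).symm

lemma addmap_sub {H : Type u} [AddCommGroup H] {h : G → H}
    (ha : ∀ x y, h (x + y) = h x + h y) (x y : G) : h (x - y) = h x - h y := by
  rw [sub_eq_add_neg, ha, addmap_neg ha, sub_eq_add_neg]

lemma hmap (n : ℕ) (hn : 0 < n) : ∃ h : G → G,
    (∀ x y, h (x + y) = h x + h y) ∧ (∀ a, h (S.φ a) = S.φ (S.dv n a)) ∧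
    (∀ x, n • h x = x) ∧ (∀ x, h (n • x) = x) := by
  have hψ : ∀ a b c : E, S.EA.padd a b = some c →
      S.φ (S.dv n c) = S.φ (S.dv n a) + S.φ (S.dv n b) := by
    intro a b c h
    exact ((S.hpadd _ _ _).mp (S.dv_padd hn h)).2
  obtain ⟨h, ⟨hadd, hφ⟩, -⟩ := S.huniv G (fun a => S.φ (S.dv n a)) hψ
  have hid : (fun x => n • h x) = (fun x : G => x) := by
    refine S.ext_add (fun x y => by rw [hadd, smul_add]) (fun x y => rfl) ?_
    intro a
    show n • h (S.φ a) = S.φ a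
    rw [hφ, S.phi_dv hn]
  have hid' : ∀ x, n • h x = x := fun x => congrFun hid x
  exact ⟨h, hadd, hφ, hid', fun x => by rw [addmap_nsmul hadd, hid']⟩

include S in
lemma nsmul_inj {n : ℕ} (hn : 0 < n) {x y : G} (h : n • x = n • y) : x = y := by
  obtain ⟨f, -, -, -, hf⟩ := S.hmap n hn
  rw [← hf x, ← hf y, h]

end Ctx
end S17

namespace S17
open EffectAlgebra
set_option linter.unusedSectionVars false

variable {E G : Type u} [AddCommGroup G] [PartialOrder G]
  [CovariantClass G G (· + ·) (· ≤ ·)]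

namespace Ctx

variable (S : Ctx E G)

section P
variable {p : E} (hp : p ∈ S.CB.P)
include hp

lemma P_compl : S.EA.compl p ∈ S.CB.P := S.CB.sub.2.2.1 p hp

lemma Jt_add (x y : G) : S.Jt p (x + y) = S.Jt p x + S.Jt p y := (S.hJt p hp).1 x y
lemma Jt_mono {x y : G} (h : x ≤ y) : S.Jt p x ≤ S.Jt p y := (S.hJt p hp).2.1 x y h
lemma Jt_phi (a : E) : S.Jt p (S.φ a) = S.φ (S.CB.J p a) := (S.hJt p hp).2.2 a

lemma Jt_zero : S.Jt p 0 = 0 := addmap_zero (S.Jt_add hp)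
lemma Jt_nsmul (n : ℕ) (x : G) : S.Jt p (n • x) = n • S.Jt p x :=
  addmap_nsmul (S.Jt_add hp) n x
lemma Jt_neg (x : G) : S.Jt p (-x) = - S.Jt p x := addmap_neg (S.Jt_add hp) x
lemma Jt_sub (x y : G) : S.Jt p (x - y) = S.Jt p x - S.Jt p y :=
  addmap_sub (S.Jt_add hp) x y
lemma Jt_nonneg {x : G} (h : 0 ≤ x) : 0 ≤ S.Jt p x := by
  have := S.Jt_mono hp h; rwa [S.Jt_zero hp] at this
lemma Jt_nonpos {x : G} (h : x ≤ 0) : S.Jt p x ≤ 0 := by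
  have := S.Jt_mono hp h; rwa [S.Jt_zero hp] at this

lemma J_one : S.CB.J p S.EA.one = p := S.CB.focus p hp

lemma Jt_u : S.Jt p S.u = S.φ p := by
  rw [← S.hφ1, S.Jt_phi hp, S.J_one hp]

lemma Jt_le_phi {x : G} (h : x ≤ S.u) : S.Jt p x ≤ S.φ p := by
  have := S.Jt_mono hp h; rwa [S.Jt_u hp] at this

lemma J_fix {a : E} (h : S.EA.le a p) : S.CB.J p a = a := by
  have := (S.CB.compr p hp).1.2 a
  rw [S.J_one hp] at this
  exact this h

lemma J_ker {a : E} : S.CB.J p a = S.EA.zero ↔ S.EA.le a (S.EA.compl p) := by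
  have := (S.CB.compr p hp).2 a
  rwa [S.J_one hp] at this

lemma J_padd {a b c : E} (h : S.EA.padd a b = some c) :
    S.EA.padd (S.CB.J p a) (S.CB.J p b) = some (S.CB.J p c) :=
  (S.CB.compr p hp).1.1 a b c h

lemma phi_J_add {a b c : E} (h : S.EA.padd a b = some c) :
    S.φ (S.CB.J p c) = S.φ (S.CB.J p a) + S.φ (S.CB.J p b) :=
  ((S.hpadd _ _ _).mp (S.J_padd hp h)).2

lemma phi_J_split (a : E) :
    S.φ p = S.φ (S.CB.J p a) + S.φ (S.CB.J p (S.EA.compl a)) := by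
  have := S.phi_J_add hp (S.compl_padd a)
  rwa [S.J_one hp] at this

lemma phi_J_le (a : E) : S.φ (S.CB.J p a) ≤ S.φ p := by
  rw [S.phi_J_split hp a]
  exact le_add_of_nonneg_right (S.phi_nonneg _)

lemma J_zero : S.CB.J p S.EA.zero = S.EA.zero := by
  have h := S.phi_J_add hp (S.padd_zero S.EA.zero)
  have : S.φ (S.CB.J p S.EA.zero) = 0 := by
    have := h.symm
    rwa [add_eq_left] at this
  exact S.hinj (by rw [this, S.phi_zero])

lemma inC_iff (a : E) : inC S.EA S.CB a p ↔
    S.φ a = S.Jt p (S.φ a) + S.Jt (S.EA.compl p) (S.φ a) := by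
  rw [inC, S.Jt_phi hp, S.Jt_phi (S.P_compl hp)]
  constructor
  · intro h
    exact ((S.hpadd _ _ _).mp h).2
  · intro h
    exact (S.hpadd _ _ _).mpr ⟨h ▸ S.phi_le_u a, h⟩

lemma inCG_phi (a : E) : inCG S.EA S.Jt (S.φ a) p ↔ inC S.EA S.CB a p :=
  (S.inC_iff hp a).symm

lemma inCG_u : inCG S.EA S.Jt S.u p := by
  rw [inCG, S.Jt_u hp, S.Jt_u (S.P_compl hp), S.phi_compl]
  abel

lemma inCG_zero : inCG S.EA S.Jt 0 p := by
  rw [inCG, S.Jt_zero hp, S.Jt_zero (S.P_compl hp), add_zero]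

lemma inCG_add {g₁ g₂ : G} (h₁ : inCG S.EA S.Jt g₁ p) (h₂ : inCG S.EA S.Jt g₂ p) :
    inCG S.EA S.Jt (g₁ + g₂) p := by
  rw [inCG, S.Jt_add hp, S.Jt_add (S.P_compl hp)]
  calc g₁ + g₂ = (S.Jt p g₁ + S.Jt (S.EA.compl p) g₁)
      + (S.Jt p g₂ + S.Jt (S.EA.compl p) g₂) := by rw [← h₁, ← h₂]
    _ = _ := by abel

lemma inCG_neg {g : G} (h : inCG S.EA S.Jt g p) : inCG S.EA S.Jt (-g) p := by
  rw [inCG, S.Jt_neg hp, S.Jt_neg (S.P_compl hp)]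
  rw [inCG] at h
  rw [← neg_add]
  exact congrArg Neg.neg h

lemma inCG_sub {g₁ g₂ : G} (h₁ : inCG S.EA S.Jt g₁ p) (h₂ : inCG S.EA S.Jt g₂ p) :
    inCG S.EA S.Jt (g₁ - g₂) p := by
  rw [sub_eq_add_neg]; exact S.inCG_add hp h₁ (S.inCG_neg hp h₂)

lemma inCG_nsmul {g : G} (n : ℕ) (h : inCG S.EA S.Jt g p) :
    inCG S.EA S.Jt (n • g) p := by
  induction n with
  | zero => simpa using S.inCG_zero hp
  | succ n ih => rw [succ_nsmul]; exact S.inCG_add hp ih h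

lemma inCG_of_nsmul {g : G} {n : ℕ} (hn : 0 < n) (h : inCG S.EA S.Jt (n • g) p) :
    inCG S.EA S.Jt g p := by
  rw [inCG] at h ⊢
  refine S.nsmul_inj hn ?_
  rw [h, smul_add, S.Jt_nsmul hp, S.Jt_nsmul (S.P_compl hp)]

end P
end Ctx
end S17

namespace S17
open EffectAlgebra
set_option linter.unusedSectionVars false

variable {E G : Type u} [AddCommGroup G] [PartialOrder G]
  [CovariantClass G G (· + ·) (· ≤ ·)]

namespace Ctx

variable (S : Ctx E G)

include S in
lemma mackey_symm {p q : E} (h : Mackey S.EA p q) : Mackey S.EA q p := by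
  obtain ⟨a1, b1, c, d, e, h1, h2, h3, h4⟩ := h
  exact ⟨b1, a1, c, d, e, by rw [S.EA.comm]; exact h1, h2, h4, h3⟩

section P
variable {p : E} (hp : p ∈ S.CB.P)
include hp

lemma le_compl_of {a1 b1 c d e q : E} (h1 : S.EA.padd a1 b1 = some d)
    (h2 : S.EA.padd d c = some e) (h3 : S.EA.padd a1 c = some p)
    (h4 : S.EA.padd b1 c = some q) : S.EA.le b1 (S.EA.compl p) := by
  letI := og G
  have e1 := ((S.hpadd _ _ _).mp h1).2
  have e2 := ((S.hpadd _ _ _).mp h2).1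
  have e3 := ((S.hpadd _ _ _).mp h3).2
  rw [S.le_iff, S.phi_compl, e3]
  have h5 : S.φ a1 + S.φ b1 + S.φ c ≤ S.u := by
    calc S.φ a1 + S.φ b1 + S.φ c = S.φ d + S.φ c := by rw [e1]
      _ ≤ S.u := e2
  calc S.φ b1 = (S.φ a1 + S.φ b1 + S.φ c) - (S.φ a1 + S.φ c) := by abel
    _ ≤ S.u - (S.φ a1 + S.φ c) := sub_le_sub_right h5 _

lemma mackey_J_eq {a1 b1 c d e q : E} (h1 : S.EA.padd a1 b1 = some d)
    (h2 : S.EA.padd d c = some e) (h3 : S.EA.padd a1 c = some p)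
    (h4 : S.EA.padd b1 c = some q) :
    S.CB.J p q = c ∧ inC S.EA S.CB q p := by
  letI := og G
  have hb1 : S.EA.le b1 (S.EA.compl p) := S.le_compl_of hp h1 h2 h3 h4
  have e3 := ((S.hpadd _ _ _).mp h3).2
  have hcp : S.EA.le c p := by
    rw [S.le_iff, e3]
    exact le_add_of_nonneg_left (S.phi_nonneg a1)
  have hJb1 : S.CB.J p b1 = S.EA.zero := (S.J_ker hp).mpr hb1
  have hJc : S.CB.J p c = c := S.J_fix hp hcp
  have hq : S.φ (S.CB.J p q) = S.φ c := by
    rw [S.phi_J_add hp h4, hJb1, hJc, S.phi_zero, zero_add]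
  have hJpq : S.CB.J p q = c := S.hinj hq
  -- now the complement part
  have hp' := S.P_compl hp
  have hJ'c : S.CB.J (S.EA.compl p) c = S.EA.zero := by
    rw [S.J_ker hp']
    rw [S.compl_compl]
    exact hcp
  have hJ'b1 : S.CB.J (S.EA.compl p) b1 = b1 := S.J_fix hp' hb1
  have hq' : S.φ (S.CB.J (S.EA.compl p) q) = S.φ b1 := by
    rw [S.phi_J_add hp' h4, hJ'c, hJ'b1, S.phi_zero, add_zero]
  refine ⟨hJpq, ?_⟩
  rw [inC]
  refine (S.hpadd _ _ _).mpr ⟨?_, ?_⟩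
  · rw [hq, hq']
    have := ((S.hpadd _ _ _).mp h4).2
    rw [add_comm] at this
    rw [← this]
    exact S.phi_le_u q
  · rw [hq, hq']
    have := ((S.hpadd _ _ _).mp h4).2
    rw [this]; abel

lemma mackey_inC {q : E} (hm : Mackey S.EA p q) : inC S.EA S.CB q p := by
  obtain ⟨a1, b1, c, d, e, h1, h2, h3, h4⟩ := hm
  exact (S.mackey_J_eq hp h1 h2 h3 h4).2

lemma inC_mackey {q : E} (h : inC S.EA S.CB q p) : Mackey S.EA p q := by
  letI := og G
  have hp' := S.P_compl hp
  set c := S.CB.J p q with hc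
  set q1 := S.CB.J (S.EA.compl p) q with hq1
  have hcq : S.φ c + S.φ q1 = S.φ q := (((S.hpadd _ _ _).mp h).2).symm
  have hcle : S.φ c ≤ S.φ p := S.phi_J_le hp q
  have hq1le : S.φ q1 ≤ S.u - S.φ p := by
    have := S.phi_J_le hp' q
    rwa [S.phi_compl] at this
  obtain ⟨p1, hp1⟩ := S.hsurj (S.φ p - S.φ c) (by simpa using hcle)
    (le_trans (by simpa using S.phi_nonneg c) (S.phi_le_u p))
  obtain ⟨d, hd⟩ := S.hsurj (S.φ p1 + S.φ q1)
    (add_nonneg (S.phi_nonneg _) (S.phi_nonneg _))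
    (by rw [hp1]
        calc S.φ p - S.φ c + S.φ q1 ≤ S.φ p - S.φ c + (S.u - S.φ p) :=
          add_le_add_right hq1le _
          _ = S.u - S.φ c := by abel
          _ ≤ S.u := by simpa using S.phi_nonneg c)
  obtain ⟨e, he⟩ := S.hsurj (S.φ d + S.φ c)
    (add_nonneg (S.phi_nonneg _) (S.phi_nonneg _))
    (by rw [hd, hp1]
        calc S.φ p - S.φ c + S.φ q1 + S.φ c = S.φ p + S.φ q1 := by abel
          _ ≤ S.φ p + (S.u - S.φ p) := add_le_add_right hq1le _
          _ = S.u := by abel)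
  refine ⟨p1, q1, c, d, e, ?_, ?_, ?_, ?_⟩
  · exact (S.hpadd _ _ _).mpr ⟨by rw [← hd]; exact S.phi_le_u d, hd⟩
  · exact (S.hpadd _ _ _).mpr ⟨by rw [← he]; exact S.phi_le_u e, he⟩
  · refine (S.hpadd _ _ _).mpr ⟨?_, by rw [hp1]; abel⟩
    rw [hp1]
    calc S.φ p - S.φ c + S.φ c = S.φ p := by abel
      _ ≤ S.u := S.phi_le_u p
  · refine (S.hpadd _ _ _).mpr ⟨?_, ?_⟩
    · rw [add_comm, hcq]; exact S.phi_le_u q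
    · rw [← hcq]; abel

lemma le_inC {q : E} (h : S.EA.le q p) : inC S.EA S.CB q p := by
  rw [inC, S.J_fix hp h]
  have : S.CB.J (S.EA.compl p) q = S.EA.zero := by
    rw [S.J_ker (S.P_compl hp), S.compl_compl]
    exact h
  rw [this]
  exact S.padd_zero q

lemma inC_compl_left {a : E} (h : inC S.EA S.CB a p) :
    inC S.EA S.CB a (S.EA.compl p) := by
  rw [inC, S.compl_compl, S.EA.comm]
  exact h

lemma inC_compl_right {q : E} (hq : q ∈ S.CB.P) (h : inC S.EA S.CB q p) :
    inC S.EA S.CB (S.EA.compl q) p := by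
  have hp' := S.P_compl hp
  have h1 : S.φ (S.CB.J p (S.EA.compl q)) = S.φ p - S.φ (S.CB.J p q) := by
    have := S.phi_J_split hp q
    rw [this]; abel
  have h2 : S.φ (S.CB.J (S.EA.compl p) (S.EA.compl q))
      = (S.u - S.φ p) - S.φ (S.CB.J (S.EA.compl p) q) := by
    have := S.phi_J_split hp' q
    rw [← S.phi_compl, this]; abel
  have hq' : S.φ (S.CB.J p q) + S.φ (S.CB.J (S.EA.compl p) q) = S.φ q :=
    (((S.hpadd _ _ _).mp h).2).symm
  rw [inC]
  refine (S.hpadd _ _ _).mpr ⟨?_, ?_⟩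
  · rw [h1, h2]
    calc S.φ p - S.φ (S.CB.J p q) + (S.u - S.φ p - S.φ (S.CB.J (S.EA.compl p) q))
        = S.u - S.φ q := by rw [← hq']; abel
      _ ≤ S.u := by simpa using S.phi_nonneg q
  · rw [h1, h2, S.phi_compl, ← hq']; abel

lemma inC_self : inC S.EA S.CB p p := S.le_inC hp (S.le_refl' p)

end P

lemma inC_symm {p q : E} (hp : p ∈ S.CB.P) (hq : q ∈ S.CB.P)
    (h : inC S.EA S.CB q p) : inC S.EA S.CB p q :=
  S.mackey_inC hq (S.mackey_symm (S.inC_mackey hp h))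

lemma JJ {p q : E} (hp : p ∈ S.CB.P) (hq : q ∈ S.CB.P) (hm : Mackey S.EA p q) :
    S.CB.J p q ∈ S.CB.P ∧ S.CB.J p ∘ S.CB.J q = S.CB.J (S.CB.J p q) := by
  obtain ⟨r, hr, hcomp⟩ := S.CB.mackey p hp q hq hm
  have : r = S.CB.J p q := by
    have := congrFun hcomp S.EA.one
    simp only [Function.comp_apply] at this
    rw [S.J_one hq, S.J_one hr] at this
    exact this.symm
  rw [← this]
  exact ⟨hr, hcomp⟩

lemma Jt_comp {p q : E} (hp : p ∈ S.CB.P) (hq : q ∈ S.CB.P) (hm : Mackey S.EA p q) :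
    ∀ x, S.Jt (S.CB.J p q) x = S.Jt p (S.Jt q x) := by
  obtain ⟨hrP, hcomp⟩ := S.JJ hp hq hm
  have : S.Jt (S.CB.J p q) = fun x => S.Jt p (S.Jt q x) := by
    refine S.ext_add (S.Jt_add hrP) (fun x y => by rw [S.Jt_add hq, S.Jt_add hp]) ?_
    intro a
    rw [S.Jt_phi hrP, S.Jt_phi hq, S.Jt_phi hp, ← congrFun hcomp a,
      Function.comp_apply]
  exact fun x => congrFun this x

lemma mackey_J_comm {p q : E} (hp : p ∈ S.CB.P) (hq : q ∈ S.CB.P)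
    (hm : Mackey S.EA p q) : S.CB.J p q = S.CB.J q p := by
  obtain ⟨a1, b1, c, d, e, h1, h2, h3, h4⟩ := hm
  have e1 := (S.mackey_J_eq hp h1 h2 h3 h4).1
  have e2 := (S.mackey_J_eq hq (by rw [S.EA.comm]; exact h1) h2 h4 h3).1
  rw [e1, e2]

lemma J_le_eq {p q : E} (hp : p ∈ S.CB.P) (hq : q ∈ S.CB.P)
    (h : S.EA.le q p) : S.CB.J q p = q := by
  letI := og G
  obtain ⟨c, hc⟩ := h
  have h1 : S.φ (S.CB.J q p) = S.φ (S.CB.J q q) + S.φ (S.CB.J q c) :=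
    S.phi_J_add hq hc
  have h2 : S.CB.J q q = q := S.J_fix hq (S.le_refl' q)
  have hle : S.φ (S.CB.J q p) ≤ S.φ q := S.phi_J_le hq p
  have hge : S.φ q ≤ S.φ (S.CB.J q p) := by
    rw [h1, h2]
    exact le_add_of_nonneg_right (S.phi_nonneg _)
  exact S.hinj (le_antisymm hle hge)

lemma mackey_of_le {p q : E} (hp : p ∈ S.CB.P) (hq : q ∈ S.CB.P)
    (h : S.EA.le q p) : Mackey S.EA q p :=
  S.mackey_symm (S.inC_mackey hp (S.le_inC hp h))

lemma Jt_absorb {p q : E} (hp : p ∈ S.CB.P) (hq : q ∈ S.CB.P)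
    (h : S.EA.le q p) : ∀ x, S.Jt q x = S.Jt q (S.Jt p x) := by
  intro x
  have := S.Jt_comp hq hp (S.mackey_of_le hp hq h) x
  rwa [S.J_le_eq hp hq h] at this

lemma Jt_one : ∀ x, S.Jt S.EA.one x = x := by
  have h1 : S.EA.one ∈ S.CB.P := S.CB.sub.2.1
  have : S.Jt S.EA.one = fun x => x := by
    refine S.ext_add (S.Jt_add h1) (fun x y => rfl) ?_
    intro a
    rw [S.Jt_phi h1, S.J_fix h1 (S.le_one a)]
  exact fun x => congrFun this x

end Ctx
end S17

namespace S17
open EffectAlgebra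
set_option linter.unusedSectionVars false

variable {E G : Type u} [AddCommGroup G] [PartialOrder G]
  [CovariantClass G G (· + ·) (· ≤ ·)]

namespace Ctx

variable (S : Ctx E G)

lemma sum_rule {a b c d : E} (hb : b ∈ S.CB.P) (hc : c ∈ S.CB.P)
    (hd : S.EA.padd b c = some d) (ha : inC S.EA S.CB a b) :
    S.EA.padd (S.CB.J b a) (S.CB.J c a) = some (S.CB.J d a) := by
  letI := og G
  have hdP : d ∈ S.CB.P := S.CB.sub.2.2.2 b hb c hc d hd
  have lebd : S.EA.le b d := ⟨c, hd⟩
  have lecd : S.EA.le c d := ⟨b, by rw [S.EA.comm]; exact hd⟩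
  have hphid : S.φ d = S.φ b + S.φ c := ((S.hpadd _ _ _).mp hd).2
  have mdb : Mackey S.EA d b := S.mackey_symm (S.mackey_of_le hdP hb lebd)
  have comp1 : S.CB.J d (S.CB.J b a) = S.CB.J b a := by
    have := congrFun (S.JJ hdP hb mdb).2 a
    simp only [Function.comp_apply] at this
    rw [this, S.J_fix hdP lebd]
  have mdb' : Mackey S.EA d (S.EA.compl b) :=
    S.inC_mackey hdP (S.inC_compl_right hdP hb (S.le_inC hdP lebd))
  have hJdb' : S.CB.J d (S.EA.compl b) = c := by
    have hbc' : S.EA.padd c (S.EA.compl d) = some (S.EA.compl b) := by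
      refine (S.hpadd _ _ _).mpr ⟨?_, ?_⟩
      · rw [S.phi_compl]
        calc S.φ c + (S.u - S.φ d) = S.u - S.φ b := by rw [hphid]; abel
          _ ≤ S.u := by simpa using S.phi_nonneg b
      · rw [S.phi_compl, S.phi_compl, hphid]; abel
    have e1 := S.phi_J_add hdP hbc'
    rw [S.J_fix hdP lecd] at e1
    have e2 : S.CB.J d (S.EA.compl d) = S.EA.zero :=
      (S.J_ker hdP).mpr (S.le_refl' _)
    rw [e2, S.phi_zero, add_zero] at e1
    exact S.hinj e1
  have comp2 : S.CB.J d (S.CB.J (S.EA.compl b) a) = S.CB.J c a := by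
    have := congrFun (S.JJ hdP (S.P_compl hb) mdb').2 a
    simp only [Function.comp_apply] at this
    rw [this, hJdb']
  have := S.J_padd hdP ha
  rwa [comp1, comp2] at this

lemma inC_add {a b c d : E} (hb : b ∈ S.CB.P) (hc : c ∈ S.CB.P)
    (hd : S.EA.padd b c = some d) (hab : inC S.EA S.CB a b)
    (hac : inC S.EA S.CB a c) : inC S.EA S.CB a d := by
  letI := og G
  have hdP : d ∈ S.CB.P := S.CB.sub.2.2.2 b hb c hc d hd
  have hphid : S.φ d = S.φ b + S.φ c := ((S.hpadd _ _ _).mp hd).2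
  have eA := ((S.hpadd _ _ _).mp (S.sum_rule hb hc hd hab)).2
  have hsplit2 : S.EA.padd b (S.EA.compl d) = some (S.EA.compl c) := by
    refine (S.hpadd _ _ _).mpr ⟨?_, ?_⟩
    · rw [S.phi_compl]
      calc S.φ b + (S.u - S.φ d) = S.u - S.φ c := by rw [hphid]; abel
        _ ≤ S.u := by simpa using S.phi_nonneg c
    · rw [S.phi_compl, S.phi_compl, hphid]; abel
  have eB := ((S.hpadd _ _ _).mp
    (S.sum_rule hb (S.P_compl hdP) hsplit2 hab)).2
  have eC := ((S.hpadd _ _ _).mp hac).2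
  rw [inC]
  refine (S.hpadd _ _ _).mpr ⟨?_, ?_⟩
  all_goals
    have key : S.φ (S.CB.J d a) + S.φ (S.CB.J (S.EA.compl d) a) = S.φ a := by
      calc S.φ (S.CB.J d a) + S.φ (S.CB.J (S.EA.compl d) a)
          = (S.φ (S.CB.J b a) + S.φ (S.CB.J c a))
            + S.φ (S.CB.J (S.EA.compl d) a) := by rw [← eA]
        _ = S.φ (S.CB.J c a) + (S.φ (S.CB.J b a)
            + S.φ (S.CB.J (S.EA.compl d) a)) := by abel
        _ = S.φ (S.CB.J c a) + S.φ (S.CB.J (S.EA.compl c) a) := by rw [← eB]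
        _ = S.φ a := eC.symm
  · rw [key]; exact S.phi_le_u a
  · rw [key]

lemma inC_J {a p q : E} (hp : p ∈ S.CB.P) (hq : q ∈ S.CB.P)
    (hm : Mackey S.EA p q) (hap : inC S.EA S.CB a p)
    (haq : inC S.EA S.CB a q) : inC S.EA S.CB a (S.CB.J p q) := by
  letI := og G
  have hcP : S.CB.J p q ∈ S.CB.P := (S.JJ hp hq hm).1
  have hqp : inC S.EA S.CB q p := S.mackey_inC hp hm
  have mbq' : Mackey S.EA p (S.EA.compl q) :=
    S.inC_mackey hp (S.inC_compl_right hp hq hqp)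
  have btP : S.CB.J p (S.EA.compl q) ∈ S.CB.P := (S.JJ hp (S.P_compl hq) mbq').1
  have hsplit : S.φ p = S.φ (S.CB.J p q) + S.φ (S.CB.J p (S.EA.compl q)) :=
    S.phi_J_split hp q
  have hcc' : S.EA.padd (S.EA.compl p) (S.CB.J p (S.EA.compl q))
      = some (S.EA.compl (S.CB.J p q)) := by
    refine (S.hpadd _ _ _).mpr ⟨?_, ?_⟩
    · rw [S.phi_compl]
      calc S.u - S.φ p + S.φ (S.CB.J p (S.EA.compl q))
          = S.u - S.φ (S.CB.J p q) := by rw [hsplit]; abel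
        _ ≤ S.u := by simpa using S.phi_nonneg _
    · rw [S.phi_compl, S.phi_compl, hsplit]; abel
  have eX := ((S.hpadd _ _ _).mp
    (S.sum_rule (S.P_compl hp) btP hcc' (S.inC_compl_left hp hap))).2
  have e1 : S.CB.J (S.CB.J p q) a = S.CB.J p (S.CB.J q a) := by
    have := congrFun (S.JJ hp hq hm).2 a
    simp only [Function.comp_apply] at this
    exact this.symm
  have e2 : S.CB.J (S.CB.J p (S.EA.compl q)) a
      = S.CB.J p (S.CB.J (S.EA.compl q) a) := by
    have := congrFun (S.JJ hp (S.P_compl hq) mbq').2 a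
    simp only [Function.comp_apply] at this
    exact this.symm
  have e3 := ((S.hpadd _ _ _).mp (S.J_padd hp haq)).2
  have e4 := ((S.hpadd _ _ _).mp hap).2
  rw [inC]
  refine (S.hpadd _ _ _).mpr ⟨?_, ?_⟩
  all_goals
    have key : S.φ (S.CB.J (S.CB.J p q) a)
        + S.φ (S.CB.J (S.EA.compl (S.CB.J p q)) a) = S.φ a := by
      calc S.φ (S.CB.J (S.CB.J p q) a)
          + S.φ (S.CB.J (S.EA.compl (S.CB.J p q)) a)
          = S.φ (S.CB.J (S.CB.J p q) a) + (S.φ (S.CB.J (S.EA.compl p) a)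
            + S.φ (S.CB.J (S.CB.J p (S.EA.compl q)) a)) := by rw [← eX]
        _ = S.φ (S.CB.J p (S.CB.J q a)) + (S.φ (S.CB.J (S.EA.compl p) a)
            + S.φ (S.CB.J p (S.CB.J (S.EA.compl q) a))) := by rw [e1, e2]
        _ = (S.φ (S.CB.J p (S.CB.J q a)) + S.φ (S.CB.J p (S.CB.J (S.EA.compl q) a)))
            + S.φ (S.CB.J (S.EA.compl p) a) := by abel
        _ = S.φ (S.CB.J p a) + S.φ (S.CB.J (S.EA.compl p) a) := by rw [← e3]
        _ = S.φ a := e4.symm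
  · rw [key]; exact S.phi_le_u a
  · rw [key]

lemma Jt_commute {p r : E} (hp : p ∈ S.CB.P) (hr : r ∈ S.CB.P)
    (h : inC S.EA S.CB p r) :
    ∀ x, S.Jt r (S.Jt p x) = S.Jt p (S.Jt r x) := by
  intro x
  have mrp : Mackey S.EA r p := S.inC_mackey hr h
  have mpr : Mackey S.EA p r := S.mackey_symm mrp
  have c1 := S.Jt_comp hr hp mrp x
  have c2 := S.Jt_comp hp hr mpr x
  rw [S.mackey_J_comm hr hp mrp] at c1
  rw [← c1, ← c2]

end Ctx
end S17

namespace S17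
open EffectAlgebra
set_option linter.unusedSectionVars false

variable {E G : Type u} [AddCommGroup G] [PartialOrder G]
  [CovariantClass G G (· + ·) (· ≤ ·)]

namespace Ctx

variable (S : Ctx E G)

lemma mem_bicomm {a p : E} : p ∈ bicomm S.EA S.CB a ↔
    (p ∈ S.CB.P ∧ inC S.EA S.CB a p) ∧
      ∀ q, q ∈ S.CB.P ∧ inC S.EA S.CB a q → inC S.EA S.CB p q := Iff.rfl

lemma bic_P {a p : E} (h : p ∈ bicomm S.EA S.CB a) : p ∈ S.CB.P := h.1.1

lemma bic_zero (a : E) : S.EA.zero ∈ bicomm S.EA S.CB a := by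
  have h0 : S.EA.zero ∈ S.CB.P := S.CB.sub.1
  have h1 : S.EA.one ∈ S.CB.P := S.CB.sub.2.1
  refine ⟨⟨h0, ?_⟩, ?_⟩
  · show S.EA.padd (S.CB.J S.EA.zero a) (S.CB.J (S.EA.compl S.EA.zero) a) = some a
    have hz : S.CB.J S.EA.zero a = S.EA.zero := by
      rw [S.J_ker h0, S.compl_zero]; exact S.le_one a
    rw [S.compl_zero, hz, S.J_fix h1 (S.le_one a)]
    exact S.zero_padd a
  · rintro q ⟨hq, -⟩
    show S.EA.padd (S.CB.J q S.EA.zero) (S.CB.J (S.EA.compl q) S.EA.zero)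
      = some S.EA.zero
    rw [S.J_zero hq, S.J_zero (S.P_compl hq)]
    exact S.zero_padd _

lemma bic_one (a : E) : S.EA.one ∈ bicomm S.EA S.CB a := by
  have h0 : S.EA.zero ∈ S.CB.P := S.CB.sub.1
  have h1 : S.EA.one ∈ S.CB.P := S.CB.sub.2.1
  refine ⟨⟨h1, ?_⟩, ?_⟩
  · show S.EA.padd (S.CB.J S.EA.one a) (S.CB.J (S.EA.compl S.EA.one) a) = some a
    have hz : S.CB.J S.EA.zero a = S.EA.zero := by
      rw [S.J_ker h0, S.compl_zero]; exact S.le_one a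
    rw [S.compl_one, hz, S.J_fix h1 (S.le_one a)]
    exact S.padd_zero a
  · rintro q ⟨hq, -⟩
    show S.EA.padd (S.CB.J q S.EA.one) (S.CB.J (S.EA.compl q) S.EA.one)
      = some S.EA.one
    rw [S.J_one hq, S.J_one (S.P_compl hq)]
    exact S.compl_padd q

lemma bic_compl {a p : E} (h : p ∈ bicomm S.EA S.CB a) :
    S.EA.compl p ∈ bicomm S.EA S.CB a := by
  obtain ⟨⟨hp, hin⟩, hcomm⟩ := h
  exact ⟨⟨S.P_compl hp, S.inC_compl_left hp hin⟩,
    fun q hq => S.inC_compl_right hq.1 hp (hcomm q hq)⟩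

lemma bic_add {a p r s : E} (hp : p ∈ bicomm S.EA S.CB a)
    (hr : r ∈ bicomm S.EA S.CB a) (hs : S.EA.padd p r = some s) :
    s ∈ bicomm S.EA S.CB a := by
  obtain ⟨⟨hpP, hpin⟩, hpc⟩ := hp
  obtain ⟨⟨hrP, hrin⟩, hrc⟩ := hr
  have hsP : s ∈ S.CB.P := S.CB.sub.2.2.2 p hpP r hrP s hs
  refine ⟨⟨hsP, S.inC_add hpP hrP hs hpin hrin⟩, ?_⟩
  intro q hq
  have e1 := (S.inC_iff hq.1 p).mp (hpc q hq)
  have e2 := (S.inC_iff hq.1 r).mp (hrc q hq)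
  have es : S.φ s = S.φ p + S.φ r := ((S.hpadd _ _ _).mp hs).2
  refine (S.inC_iff hq.1 s).mpr ?_
  rw [es, S.Jt_add hq.1, S.Jt_add (S.P_compl hq.1)]
  calc S.φ p + S.φ r
      = (S.Jt q (S.φ p) + S.Jt (S.EA.compl q) (S.φ p))
        + (S.Jt q (S.φ r) + S.Jt (S.EA.compl q) (S.φ r)) := by rw [← e1, ← e2]
    _ = _ := by abel

lemma bic_J {a p r : E} (hp : p ∈ bicomm S.EA S.CB a)
    (hr : r ∈ bicomm S.EA S.CB a) : S.CB.J p r ∈ bicomm S.EA S.CB a := by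
  obtain ⟨⟨hpP, hpin⟩, hpc⟩ := hp
  obtain ⟨⟨hrP, hrin⟩, hrc⟩ := hr
  have hrp : inC S.EA S.CB r p := hrc p ⟨hpP, hpin⟩
  have mpr : Mackey S.EA p r := S.inC_mackey hpP hrp
  have hcP : S.CB.J p r ∈ S.CB.P := (S.JJ hpP hrP mpr).1
  refine ⟨⟨hcP, S.inC_J hpP hrP mpr hpin hrin⟩, ?_⟩
  intro q hq
  have hqP := hq.1
  have hq'P := S.P_compl hqP
  have hpq : inC S.EA S.CB p q := hpc q hq
  have hpq' : inC S.EA S.CB p (S.EA.compl q) := S.inC_compl_left hqP hpq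
  have hrq : inC S.EA S.CB r q := hrc q hq
  refine (S.inC_iff hqP _).mpr ?_
  have hφc : S.φ (S.CB.J p r) = S.Jt p (S.φ r) := (S.Jt_phi hpP r).symm
  rw [hφc]
  rw [S.Jt_commute hpP hqP hpq (S.φ r), S.Jt_commute hpP hq'P hpq' (S.φ r)]
  rw [← S.Jt_add hpP]
  rw [← (S.inC_iff hqP r).mp hrq]

lemma boolean_bic (a : E) : BooleanSub S.EA S.CB (bicomm S.EA S.CB a) := by
  letI := og G
  refine ⟨fun p hp => S.bic_P hp,
    ⟨S.bic_zero a, S.bic_one a, fun p hp => S.bic_compl hp,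
      fun p hp r hr s hs => S.bic_add hp hr hs⟩, ?_⟩
  intro p hp q hq
  have hpP := S.bic_P hp
  have hqP := S.bic_P hq
  have hqp : inC S.EA S.CB q p := hq.2 p hp.1
  have mpq : Mackey S.EA p q := S.inC_mackey hpP hqp
  set c := S.CB.J p q with hc
  set p1 := S.CB.J p (S.EA.compl q) with hp1
  set q1 := S.CB.J (S.EA.compl p) q with hq1
  have hcB : c ∈ bicomm S.EA S.CB a := S.bic_J hp hq
  have hp1B : p1 ∈ bicomm S.EA S.CB a := S.bic_J hp (S.bic_compl hq)
  have hq1B : q1 ∈ bicomm S.EA S.CB a := S.bic_J (S.bic_compl hp) hq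
  have hsplit : S.φ p = S.φ c + S.φ p1 := S.phi_J_split hpP q
  have hqdec : S.φ c + S.φ q1 = S.φ q := (((S.hpadd _ _ _).mp hqp).2).symm
  have hq1le : S.φ q1 ≤ S.u - S.φ p := by
    have := S.phi_J_le (S.P_compl hpP) q
    rwa [S.phi_compl] at this
  have hp1le : S.φ p1 ≤ S.φ p := by
    rw [hsplit]
    exact le_add_of_nonneg_left (S.phi_nonneg c)
  obtain ⟨d, hd⟩ := S.hsurj (S.φ p1 + S.φ q1)
    (add_nonneg (S.phi_nonneg _) (S.phi_nonneg _))
    (by calc S.φ p1 + S.φ q1 ≤ S.φ p + (S.u - S.φ p) :=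
          add_le_add hp1le hq1le
        _ = S.u := by abel)
  obtain ⟨e, he⟩ := S.hsurj (S.φ d + S.φ c)
    (add_nonneg (S.phi_nonneg _) (S.phi_nonneg _))
    (by rw [hd]
        calc S.φ p1 + S.φ q1 + S.φ c = (S.φ c + S.φ p1) + S.φ q1 := by abel
          _ ≤ S.φ p + (S.u - S.φ p) := add_le_add (by rw [← hsplit]) hq1le
          _ = S.u := by abel)
  refine ⟨p1, hp1B, q1, hq1B, c, hcB, d, e, ?_, ?_, ?_, ?_⟩
  · exact (S.hpadd _ _ _).mpr ⟨by rw [← hd]; exact S.phi_le_u d, hd⟩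
  · exact (S.hpadd _ _ _).mpr ⟨by rw [← he]; exact S.phi_le_u e, he⟩
  · refine (S.hpadd _ _ _).mpr ⟨?_, by rw [hsplit]; abel⟩
    calc S.φ p1 + S.φ c = S.φ p := by rw [hsplit]; abel
      _ ≤ S.u := S.phi_le_u p
  · refine (S.hpadd _ _ _).mpr ⟨?_, by rw [← hqdec]; abel⟩
    calc S.φ q1 + S.φ c = S.φ q := by rw [← hqdec]; abel
      _ ≤ S.u := S.phi_le_u q

end Ctx
end S17

namespace S17
open EffectAlgebra
set_option linter.unusedSectionVars false

variable {E G : Type u} [AddCommGroup G] [PartialOrder G]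
  [CovariantClass G G (· + ·) (· ≤ ·)]

namespace Ctx

variable (S : Ctx E G)

/-- the half of the unit. -/
noncomputable def hf : E := S.dv 2 S.EA.one

lemma two_hf : S.φ (S.hf) + S.φ (S.hf) = S.u := by
  have := S.phi_dv (by norm_num : 0 < 2) S.EA.one
  rw [S.hφ1] at this
  unfold hf
  rw [← this, two_nsmul]

lemma hf_padd : S.EA.padd S.hf S.hf = some S.EA.one :=
  (S.hpadd _ _ _).mpr ⟨le_of_eq S.two_hf, by rw [S.hφ1, S.two_hf]⟩

lemma inC_hf {q : E} (hq : q ∈ S.CB.P) : inC S.EA S.CB S.hf q := by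
  have hq' := S.P_compl hq
  have e1 := S.phi_J_add hq S.hf_padd
  rw [S.J_one hq] at e1
  have e2 := S.phi_J_add hq' S.hf_padd
  rw [S.J_one hq'] at e2
  refine (S.inC_iff hq _).mpr ?_
  rw [S.Jt_phi hq, S.Jt_phi hq']
  refine S.nsmul_inj (by norm_num : 0 < 2) ?_
  rw [two_nsmul, two_nsmul]
  calc S.φ S.hf + S.φ S.hf = S.u := S.two_hf
    _ = S.φ q + S.φ (S.EA.compl q) := by rw [S.phi_compl]; abel
    _ = (S.φ (S.CB.J q S.hf) + S.φ (S.CB.J q S.hf))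
        + (S.φ (S.CB.J (S.EA.compl q) S.hf)
          + S.φ (S.CB.J (S.EA.compl q) S.hf)) := by rw [← e1, ← e2]
    _ = S.φ (S.CB.J q S.hf) + S.φ (S.CB.J (S.EA.compl q) S.hf)
        + (S.φ (S.CB.J q S.hf) + S.φ (S.CB.J (S.EA.compl q) S.hf)) := by abel

lemma dv_le_dv_one {n : ℕ} (hn : 0 < n) (a : E) :
    S.φ (S.dv n a) ≤ S.φ (S.dv n S.EA.one) := by
  have h := S.dv_padd hn (S.compl_padd a)
  exact S.le_iff.mp ⟨_, h⟩

include S in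
lemma gen_phi (g : G) : g ∈ AddSubgroup.closure (Set.range S.φ) := by
  set H := AddSubgroup.closure (Set.range S.φ) with hH
  obtain ⟨h, -, huniq⟩ := S.huniv (G ⧸ H) (fun _ => 0)
    (fun _ _ _ _ => (add_zero (0 : G ⧸ H)).symm)
  have e1 : (fun _ : G => (0 : G ⧸ H)) = h :=
    huniq (fun _ => 0) ⟨fun _ _ => (add_zero _).symm, fun _ => rfl⟩
  have e2 : (fun x : G => (x : G ⧸ H)) = h :=
    huniq _ ⟨fun x y => rfl,
      fun a => (QuotientAddGroup.eq_zero_iff _).mpr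
        (AddSubgroup.subset_closure ⟨a, rfl⟩)⟩
  have : (g : G ⧸ H) = 0 := by rw [congrFun e2 g, ← congrFun e1 g]
  exact (QuotientAddGroup.eq_zero_iff g).mp this

include S in
lemma repr_lemma (g : G) : ∃ n : ℕ, 0 < n ∧ ∃ e : E,
    g = n • (S.φ e - S.φ S.hf) := by
  letI := og G
  have two_hf' : S.φ S.hf + S.φ S.hf = S.u := S.two_hf
  refine AddSubgroup.closure_induction ?_ ?_ ?_ ?_ (S.gen_phi g)
  · rintro x ⟨a, rfl⟩
    refine ⟨2, by norm_num, ?_⟩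
    have hle : S.φ (S.dv 2 a) ≤ S.φ S.hf := S.dv_le_dv_one (by norm_num) a
    obtain ⟨e, he⟩ := S.hsurj (S.φ (S.dv 2 a) + S.φ S.hf)
      (add_nonneg (S.phi_nonneg _) (S.phi_nonneg _))
      (by calc S.φ (S.dv 2 a) + S.φ S.hf ≤ S.φ S.hf + S.φ S.hf :=
            add_le_add_left hle _
          _ = S.u := two_hf')
    refine ⟨e, ?_⟩
    rw [he]
    have h3 : S.φ (S.dv 2 a) + S.φ S.hf - S.φ S.hf = S.φ (S.dv 2 a) := by abel
    rw [h3]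
    exact (S.phi_dv (by norm_num : 0 < 2) a).symm
  · exact ⟨1, one_pos, S.hf, by simp⟩
  · rintro x y hx hy ⟨n, hn, e, he⟩ ⟨m, hm, f, hfe⟩
    refine ⟨n + m, by omega, ?_⟩
    have hN : 0 < n + m := by omega
    have hA : S.φ (S.dv (n+m) e) ≤ S.φ (S.dv (n+m) S.EA.one) :=
      S.dv_le_dv_one hN e
    have hB : S.φ (S.dv (n+m) f) ≤ S.φ (S.dv (n+m) S.EA.one) :=
      S.dv_le_dv_one hN f
    have hone : (n+m) • S.φ (S.dv (n+m) S.EA.one) = S.u := by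
      rw [S.phi_dv hN, S.hφ1]
    obtain ⟨z, hz⟩ := S.hsurj (n • S.φ (S.dv (n+m) e) + m • S.φ (S.dv (n+m) f))
      (add_nonneg (nsmul_nonneg (S.phi_nonneg _) _) (nsmul_nonneg (S.phi_nonneg _) _))
      (by calc n • S.φ (S.dv (n+m) e) + m • S.φ (S.dv (n+m) f)
            ≤ n • S.φ (S.dv (n+m) S.EA.one) + m • S.φ (S.dv (n+m) S.EA.one) :=
              add_le_add (nsmul_le_nsmul_right hA n) (nsmul_le_nsmul_right hB m)
          _ = (n + m) • S.φ (S.dv (n+m) S.EA.one) := (add_nsmul _ n m).symm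
          _ = S.u := hone)
    refine ⟨z, ?_⟩
    have hze : (n+m) • S.φ z = n • S.φ e + m • S.φ f := by
      rw [hz, smul_add, smul_comm (n+m) n, smul_comm (n+m) m,
        S.phi_dv hN, S.phi_dv hN]
    rw [he, hfe, smul_sub, smul_sub, smul_sub, hze, add_nsmul]
    abel
  · rintro x hx ⟨n, hn, e, he⟩
    refine ⟨n, hn, S.EA.compl e, ?_⟩
    rw [S.phi_compl, he]
    have : S.u - S.φ e - S.φ S.hf = -(S.φ e - S.φ S.hf) := by
      rw [← two_hf']; abel
    rw [this, smul_neg]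

end Ctx
end S17

namespace S17
open EffectAlgebra
set_option linter.unusedSectionVars false

variable {E G : Type u} [AddCommGroup G] [PartialOrder G]
  [CovariantClass G G (· + ·) (· ≤ ·)]

namespace Ctx

variable (S : Ctx E G)

lemma dir1 (hbc : BComparability S.EA S.CB) : GenCompG S.EA S.CB S.Jt S.φ := by
  letI := og G
  intro g
  obtain ⟨n, hn, e₁, hg⟩ := S.repr_lemma g
  have hcomm : CommuteEl S.EA S.CB S.hf e₁ := by
    intro p hp q hq
    have hqP : q ∈ S.CB.P := hq.1.1
    have hpq : inC S.EA S.CB p q := hp.2 q ⟨hqP, S.inC_hf hqP⟩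
    exact S.mackey_symm (S.inC_mackey hqP hpq)
  obtain ⟨p, hps, hle1, hle2⟩ := hbc.2 S.hf e₁ hcomm
  obtain ⟨hpP, hall⟩ := hps
  have hinCe : inC S.EA S.CB e₁ p := hall e₁
    (Or.inr (by simp))
  have hinCf : inC S.EA S.CB S.hf p := hall S.hf
    (Or.inr (by simp))
  have hp'P := S.P_compl hpP
  have hCGe : inCG S.EA S.Jt (S.φ e₁) p := (S.inCG_phi hpP e₁).mpr hinCe
  have hCGf : inCG S.EA S.Jt (S.φ S.hf) p := (S.inCG_phi hpP S.hf).mpr hinCf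
  have hCGg : inCG S.EA S.Jt g p := by
    rw [hg]; exact S.inCG_nsmul hpP n (S.inCG_sub hpP hCGe hCGf)
  refine ⟨p, ⟨⟨hpP, hCGg⟩, ?_⟩, ?_, ?_⟩
  · rintro q ⟨hqP, hqg⟩
    have hfq : inC S.EA S.CB S.hf q := S.inC_hf hqP
    have hCGfq : inCG S.EA S.Jt (S.φ S.hf) q := (S.inCG_phi hqP _).mpr hfq
    have hsm : inCG S.EA S.Jt (n • S.φ e₁) q := by
      have h2 : n • S.φ e₁ = g + n • S.φ S.hf := by rw [hg, smul_sub]; abel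
      rw [h2]; exact S.inCG_add hqP hqg (S.inCG_nsmul hqP n hCGfq)
    have heq : inC S.EA S.CB e₁ q :=
      (S.inCG_phi hqP _).mp (S.inCG_of_nsmul hqP hn hsm)
    have hqmem : q ∈ PCset S.EA S.CB {S.hf, e₁} := by
      refine ⟨hqP, ?_⟩
      intro a ha
      simp only [Set.mem_insert_iff, Set.mem_singleton_iff] at ha
      rcases ha with rfl | rfl
      · exact hfq
      · exact heq
    have hqp := hall q (Or.inl hqmem)
    exact (S.inCG_phi hqP p).mpr (S.inC_symm hpP hqP hqp)
  · rw [hg, S.Jt_nsmul hp'P, S.Jt_sub hp'P, S.Jt_phi hp'P, S.Jt_phi hp'P]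
    refine nsmul_nonpos ?_ n
    rw [sub_nonpos]
    exact S.le_iff.mp hle2
  · rw [hg, S.Jt_nsmul hpP, S.Jt_sub hpP, S.Jt_phi hpP, S.Jt_phi hpP]
    refine nsmul_nonneg ?_ n
    rw [sub_nonneg]
    exact S.le_iff.mp hle1

end Ctx
end S17

namespace S17
open EffectAlgebra
set_option linter.unusedSectionVars false

variable {E G : Type u} [AddCommGroup G] [PartialOrder G]
  [CovariantClass G G (· + ·) (· ≤ ·)]

namespace Ctx

variable (S : Ctx E G)

lemma addmap_sum {H : Type u} [AddCommGroup H] {h : G → H}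
    (ha : ∀ x y, h (x + y) = h x + h y) (f : ℕ → G) (n : ℕ) :
    h (∑ k ∈ Finset.range n, f k) = ∑ k ∈ Finset.range n, h (f k) := by
  induction n with
  | zero => simpa using addmap_zero ha
  | succ n ih => rw [Finset.sum_range_succ, ha, ih, Finset.sum_range_succ]

lemma zlem (hgc : GenCompG S.EA S.CB S.Jt S.φ) (harch : S.EA.ArchimedeanEA)
    {z : G} (hz : ∀ m : ℕ, m • z ≤ S.u ∧ m • (-z) ≤ S.u) : z = 0 := by
  letI := og G
  obtain ⟨p, ⟨⟨hpP, hin⟩, -⟩, hneg, hpos⟩ := hgc z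
  have hp'P := S.P_compl hpP
  have hyu : S.Jt p z ≤ S.u := by
    have h1 : z ≤ S.u := by simpa using (hz 1).1
    exact le_trans (S.Jt_le_phi hpP h1) (S.phi_le_u p)
  obtain ⟨b, hb⟩ := S.hsurj _ hpos hyu
  have hbb : ∀ m : ℕ, m • S.φ b ≤ S.u := by
    intro m
    rw [hb, ← S.Jt_nsmul hpP]
    exact le_trans (S.Jt_le_phi hpP (hz m).1) (S.phi_le_u p)
  have hb0 : b = S.EA.zero := harch b
    (fun m => ⟨(S.nsmulE_defined (hbb m)).choose,
      (S.nsmulE_defined (hbb m)).choose_spec.1⟩)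
  have hyz : S.Jt p z = 0 := by rw [← hb, hb0, S.phi_zero]
  have hy'0 : 0 ≤ S.Jt (S.EA.compl p) (-z) := by
    rw [S.Jt_neg hp'P]; exact neg_nonneg.mpr hneg
  have hy'u : S.Jt (S.EA.compl p) (-z) ≤ S.u := by
    have h1 : -z ≤ S.u := by simpa using (hz 1).2
    exact le_trans (S.Jt_le_phi hp'P h1) (S.phi_le_u _)
  obtain ⟨c, hc⟩ := S.hsurj _ hy'0 hy'u
  have hcc : ∀ m : ℕ, m • S.φ c ≤ S.u := by
    intro m
    rw [hc, ← S.Jt_nsmul hp'P]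
    exact le_trans (S.Jt_le_phi hp'P (hz m).2) (S.phi_le_u _)
  have hc0 : c = S.EA.zero := harch c
    (fun m => ⟨(S.nsmulE_defined (hcc m)).choose,
      (S.nsmulE_defined (hcc m)).choose_spec.1⟩)
  have hy'z : S.Jt (S.EA.compl p) z = 0 := by
    have h2 : S.Jt (S.EA.compl p) (-z) = 0 := by rw [← hc, hc0, S.phi_zero]
    rw [S.Jt_neg hp'P] at h2
    exact neg_eq_zero.mp h2
  rw [inCG] at hin
  rw [hin, hyz, hy'z, add_zero]

lemma squeeze (hgc : GenCompG S.EA S.CB S.Jt S.φ) (a : E) {m : ℕ} (hm : 0 < m) :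
    ∃ q : ℕ → E, (∀ k, k < m → q k ∈ bicomm S.EA S.CB a) ∧
      (∑ k ∈ Finset.range m, S.φ (q k)) ≤ m • S.φ a ∧
      m • S.φ a ≤ (∑ k ∈ Finset.range m, S.φ (q k)) + S.u := by
  letI := og G
  classical
  obtain ⟨n, rfl⟩ : ∃ n, m = n + 1 := ⟨m - 1, (Nat.succ_pred_eq_of_pos hm).symm⟩
  set m := n + 1 with hmdef
  set x := S.φ a with hxdef
  set g : ℕ → G := fun k => m • x - k • S.u with hgdef
  have honeP : S.EA.one ∈ S.CB.P := S.CB.sub.2.1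
  set p : ℕ → E := fun k => if k = 0 then S.EA.one else (hgc (g k)).choose with hpdef
  have hp0 : p 0 = S.EA.one := by simp [hpdef]
  have hPsel : ∀ k, k ≠ 0 → (p k ∈ bicommG S.EA S.CB S.Jt S.φ (g k)) ∧
      S.Jt (S.EA.compl (p k)) (g k) ≤ 0 ∧ 0 ≤ S.Jt (p k) (g k) := by
    intro k hk
    simp only [hpdef, if_neg hk]
    obtain ⟨h1, h2, h3⟩ := (hgc (g k)).choose_spec
    exact ⟨h1, h2, h3⟩
  have hpP : ∀ k, p k ∈ S.CB.P := by
    intro k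
    by_cases hk : k = 0
    · rw [hk, hp0]; exact honeP
    · exact ((hPsel k hk).1).1.1
  have hCGiff : ∀ (k : ℕ) (q : E), q ∈ S.CB.P →
      (inCG S.EA S.Jt (g k) q ↔ inC S.EA S.CB a q) := by
    intro k q hq
    constructor
    · intro h
      have h2 : m • x = g k + k • S.u := by simp only [hgdef]; abel
      have h1 : inCG S.EA S.Jt (m • x) q := by
        rw [h2]
        exact S.inCG_add hq h (S.inCG_nsmul hq k (S.inCG_u hq))
      exact (S.inCG_phi hq a).mp (S.inCG_of_nsmul hq hm h1)
    · intro h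
      have h1 : inCG S.EA S.Jt x q := (S.inCG_phi hq a).mpr h
      exact S.inCG_sub hq (S.inCG_nsmul hq m h1) (S.inCG_nsmul hq k (S.inCG_u hq))
  have hbic : ∀ k, p k ∈ bicomm S.EA S.CB a := by
    intro k
    by_cases hk : k = 0
    · rw [hk, hp0]; exact S.bic_one a
    · obtain ⟨⟨⟨hP, hin⟩, hcom⟩, -, -⟩ := hPsel k hk
      refine ⟨⟨hP, (hCGiff k (p k) hP).mp hin⟩, ?_⟩
      intro r hr
      have hrg : inCG S.EA S.Jt (g k) r := (hCGiff k r hr.1).mpr hr.2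
      exact (S.inCG_phi hr.1 (p k)).mp (hcom r ⟨hr.1, hrg⟩)
  have hinCa : ∀ k, inC S.EA S.CB a (p k) := fun k => (hbic k).1.2
  have hposJ : ∀ k, k ≠ 0 → 0 ≤ S.Jt (p k) (g k) := fun k hk => (hPsel k hk).2.2
  have hnegJ : ∀ k, k ≠ 0 → S.Jt (S.EA.compl (p k)) (g k) ≤ 0 :=
    fun k hk => (hPsel k hk).2.1
  have hchain : ∀ k, S.φ (p (k+1)) ≤ S.φ (p k) := by
    intro k
    by_cases hk0 : k = 0
    · rw [hk0, hp0, S.hφ1]; exact S.phi_le_u _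
    · have hpkP := hpP k
      have hpk1P := hpP (k+1)
      have hqp : inC S.EA S.CB (p (k+1)) (p k) :=
        (hbic (k+1)).2 (p k) ⟨hpkP, hinCa k⟩
      have hqp' : inC S.EA S.CB (p (k+1)) (S.EA.compl (p k)) :=
        S.inC_compl_left hpkP hqp
      have hp'P := S.P_compl hpkP
      have hm1 : Mackey S.EA (S.EA.compl (p k)) (p (k+1)) := S.inC_mackey hp'P hqp'
      have hm2 : Mackey S.EA (p (k+1)) (S.EA.compl (p k)) := S.mackey_symm hm1
      set s := S.CB.J (S.EA.compl (p k)) (p (k+1)) with hs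
      have hsP : s ∈ S.CB.P := (S.JJ hp'P hpk1P hm1).1
      have hc1 : ∀ y, S.Jt s y = S.Jt (S.EA.compl (p k)) (S.Jt (p (k+1)) y) :=
        S.Jt_comp hp'P hpk1P hm1
      have hc2 : ∀ y, S.Jt s y = S.Jt (p (k+1)) (S.Jt (S.EA.compl (p k)) y) := by
        intro y
        have h3 := S.Jt_comp hpk1P hp'P hm2 y
        rw [← S.mackey_J_comm hp'P hpk1P hm1] at h3
        rw [← hs] at h3
        exact h3
      have hA : 0 ≤ S.Jt s (g (k+1)) := by
        rw [hc1]
        exact S.Jt_nonneg hp'P (hposJ (k+1) (Nat.succ_ne_zero k))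
      have hB : S.Jt s (g k) ≤ 0 := by
        rw [hc2]
        exact S.Jt_nonpos hpk1P (hnegJ k hk0)
      have hgk : g k = g (k+1) + S.u := by
        simp only [hgdef]
        rw [succ_nsmul S.u k]
        abel
      have hsu : S.Jt s (g k) = S.Jt s (g (k+1)) + S.φ s := by
        rw [hgk, S.Jt_add hsP, S.Jt_u hsP]
      have hφs : S.φ s = 0 := by
        refine le_antisymm ?_ (S.phi_nonneg s)
        calc S.φ s ≤ S.Jt s (g (k+1)) + S.φ s := le_add_of_nonneg_left hA
          _ = S.Jt s (g k) := hsu.symm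
          _ ≤ 0 := hB
      have hdec := ((S.hpadd _ _ _).mp hqp).2
      rw [← hs, hφs, add_zero] at hdec
      rw [hdec]
      exact S.phi_J_le hpkP (p (k+1))
  have hek : ∀ k : ℕ, ∃ ek, ek ∈ S.CB.P ∧
      S.EA.padd (p (k+1)) ek = some (p k) ∧
      S.φ ek = S.φ (p k) - S.φ (p (k+1)) := by
    intro k
    have hle := hchain k
    obtain ⟨t, ht⟩ := S.hsurj (S.φ (p (k+1)) + (S.u - S.φ (p k)))
      (add_nonneg (S.phi_nonneg _) (by simpa using S.phi_le_u (p k)))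
      (by calc S.φ (p (k+1)) + (S.u - S.φ (p k))
            ≤ S.φ (p k) + (S.u - S.φ (p k)) := add_le_add_left hle _
          _ = S.u := by abel)
    have hpt : S.EA.padd (p (k+1)) (S.EA.compl (p k)) = some t := by
      refine (S.hpadd _ _ _).mpr ⟨?_, by rw [ht, S.phi_compl]⟩
      rw [S.phi_compl]
      calc S.φ (p (k+1)) + (S.u - S.φ (p k)) ≤ S.φ (p k) + (S.u - S.φ (p k)) :=
            add_le_add_left hle _
        _ = S.u := by abel
    have htP : t ∈ S.CB.P :=
      S.CB.sub.2.2.2 _ (hpP (k+1)) _ (S.P_compl (hpP k)) t hpt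
    refine ⟨S.EA.compl t, S.P_compl htP, ?_, ?_⟩
    · refine (S.hpadd _ _ _).mpr ⟨?_, ?_⟩
      · rw [S.phi_compl, ht]
        calc S.φ (p (k+1)) + (S.u - (S.φ (p (k+1)) + (S.u - S.φ (p k))))
            = S.φ (p k) := by abel
          _ ≤ S.u := S.phi_le_u _
      · rw [S.phi_compl, ht]; abel
    · rw [S.phi_compl, ht]; abel
  set e : ℕ → E := fun k => (hek k).choose with hedef
  have heP : ∀ k, e k ∈ S.CB.P := fun k => (hek k).choose_spec.1
  have hepadd : ∀ k, S.EA.padd (p (k+1)) (e k) = some (p k) :=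
    fun k => (hek k).choose_spec.2.1
  have hephi : ∀ k, S.φ (e k) = S.φ (p k) - S.φ (p (k+1)) :=
    fun k => (hek k).choose_spec.2.2
  have hDk : ∀ k, S.Jt (e k) x = S.Jt (p k) x - S.Jt (p (k+1)) x := by
    intro k
    have h1 := ((S.hpadd _ _ _).mp
      (S.sum_rule (hpP (k+1)) (heP k) (hepadd k) (hinCa (k+1)))).2
    rw [S.Jt_phi (hpP k), S.Jt_phi (hpP (k+1)), S.Jt_phi (heP k), h1]
    abel
  have hlow : ∀ k, (k : ℕ) • S.φ (e k) ≤ m • S.Jt (e k) x := by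
    intro k
    have hJg : 0 ≤ S.Jt (e k) (g k) := by
      by_cases hk0 : k = 0
      · subst hk0
        have h0 : (0:G) ≤ g 0 := by
          simp only [hgdef, zero_nsmul, sub_zero]
          exact nsmul_nonneg (S.phi_nonneg a) m
        exact S.Jt_nonneg (heP 0) h0
      · have hle : S.EA.le (e k) (p k) := S.le_iff.mpr
          (by rw [hephi k]; simpa using S.phi_nonneg (p (k+1)))
        rw [S.Jt_absorb (hpP k) (heP k) hle (g k)]
        exact S.Jt_nonneg (heP k) (hposJ k hk0)
    have hexp : S.Jt (e k) (g k) = m • S.Jt (e k) x - k • S.φ (e k) := by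
      simp only [hgdef]
      rw [S.Jt_sub (heP k), S.Jt_nsmul (heP k), S.Jt_nsmul (heP k), S.Jt_u (heP k)]
    rw [hexp] at hJg
    exact sub_nonneg.mp hJg
  have hup : ∀ k, m • S.Jt (e k) x ≤ (k+1) • S.φ (e k) := by
    intro k
    have hle : S.EA.le (e k) (S.EA.compl (p (k+1))) := by
      rw [S.le_iff, S.phi_compl, hephi k]
      exact sub_le_sub_right (S.phi_le_u _) _
    have hJg : S.Jt (e k) (g (k+1)) ≤ 0 := by
      rw [S.Jt_absorb (S.P_compl (hpP (k+1))) (heP k) hle (g (k+1))]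
      exact S.Jt_nonpos (heP k) (hnegJ (k+1) (Nat.succ_ne_zero k))
    have hexp : S.Jt (e k) (g (k+1)) = m • S.Jt (e k) x - (k+1) • S.φ (e k) := by
      simp only [hgdef]
      rw [S.Jt_sub (heP k), S.Jt_nsmul (heP k), S.Jt_nsmul (heP k), S.Jt_u (heP k)]
    rw [hexp] at hJg
    exact sub_nonpos.mp hJg
  have hmlow : m • S.φ (p m) ≤ m • S.Jt (p m) x := by
    have h0 : 0 ≤ S.Jt (p m) (g m) := hposJ m (Nat.succ_ne_zero n)
    have hexp : S.Jt (p m) (g m) = m • S.Jt (p m) x - m • S.φ (p m) := by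
      simp only [hgdef]
      rw [S.Jt_sub (hpP m), S.Jt_nsmul (hpP m), S.Jt_nsmul (hpP m), S.Jt_u (hpP m)]
    rw [hexp] at h0
    exact sub_nonneg.mp h0
  have hmup : S.Jt (p m) x ≤ S.φ (p m) := S.Jt_le_phi (hpP m) (S.phi_le_u a)
  have htel : ∑ k ∈ Finset.range m, S.Jt (e k) x = x - S.Jt (p m) x := by
    rw [Finset.sum_congr rfl (fun k _ => hDk k),
      Finset.sum_range_sub' (fun k => S.Jt (p k) x) m, hp0, S.Jt_one]
  have key : m • x = (∑ k ∈ Finset.range m, m • S.Jt (e k) x)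
      + m • S.Jt (p m) x := by
    calc m • x = m • ((x - S.Jt (p m) x) + S.Jt (p m) x) := by rw [sub_add_cancel]
      _ = _ := by rw [← htel, smul_add, Finset.smul_sum]
  have habel : ∀ k, (k:ℕ) • S.φ (e k)
      = ((k:ℕ) • S.φ (p k) - (k+1) • S.φ (p (k+1))) + S.φ (p (k+1)) := by
    intro k
    rw [hephi k, smul_sub, succ_nsmul]
    abel
  have habel' : ∀ k, ((k:ℕ)+1) • S.φ (e k)
      = ((k:ℕ) • S.φ (p k) - (k+1) • S.φ (p (k+1))) + S.φ (p k) := by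
    intro k
    rw [hephi k, smul_sub, succ_nsmul ( S.φ (p k)) k]
    abel
  have hT : ∑ k ∈ Finset.range m,
      ((k:ℕ) • S.φ (p k) - (k+1) • S.φ (p (k+1))) = - (m • S.φ (p m)) := by
    rw [Finset.sum_range_sub' (fun k => (k:ℕ) • S.φ (p k)) m]
    simp [zero_nsmul]
  refine ⟨fun k => p (k+1), fun k _ => hbic (k+1), ?_, ?_⟩
  · have h1 : ∑ k ∈ Finset.range m, (k:ℕ) • S.φ (e k)
        = (∑ k ∈ Finset.range m, S.φ (p (k+1))) - m • S.φ (p m) := by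
      rw [Finset.sum_congr rfl (fun k _ => habel k), Finset.sum_add_distrib, hT]
      abel
    calc ∑ k ∈ Finset.range m, S.φ (p (k+1))
        = (∑ k ∈ Finset.range m, (k:ℕ) • S.φ (e k)) + m • S.φ (p m) := by
          rw [h1]; abel
      _ ≤ (∑ k ∈ Finset.range m, m • S.Jt (e k) x) + m • S.Jt (p m) x :=
          add_le_add (Finset.sum_le_sum (fun k _ => hlow k)) hmlow
      _ = m • x := key.symm
  · have h2 : ∑ k ∈ Finset.range m, ((k:ℕ)+1) • S.φ (e k)
        = (∑ k ∈ Finset.range m, S.φ (p k)) - m • S.φ (p m) := by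
      rw [Finset.sum_congr rfl (fun k _ => habel' k), Finset.sum_add_distrib, hT]
      abel
    have h3 : ∑ k ∈ Finset.range m, S.φ (p k)
        = (∑ k ∈ Finset.range n, S.φ (p (k+1))) + S.u := by
      rw [Finset.sum_range_succ' (fun k => S.φ (p k)) n, hp0, S.hφ1]
    have h4 : (∑ k ∈ Finset.range n, S.φ (p (k+1)))
        ≤ ∑ k ∈ Finset.range m, S.φ (p (k+1)) :=
      Finset.sum_le_sum_of_subset_of_nonneg
        (Finset.range_subset_range.mpr (Nat.le_succ n))
        (fun k _ _ => S.phi_nonneg _)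
    calc m • x = (∑ k ∈ Finset.range m, m • S.Jt (e k) x) + m • S.Jt (p m) x := key
      _ ≤ (∑ k ∈ Finset.range m, ((k:ℕ)+1) • S.φ (e k)) + m • S.φ (p m) :=
          add_le_add (Finset.sum_le_sum (fun k _ => hup k))
            (nsmul_le_nsmul_right hmup m)
      _ = ∑ k ∈ Finset.range m, S.φ (p k) := by rw [h2]; abel
      _ = (∑ k ∈ Finset.range n, S.φ (p (k+1))) + S.u := h3
      _ ≤ (∑ k ∈ Finset.range m, S.φ (p (k+1))) + S.u := add_le_add_left h4 _

lemma belem_rev (hgc : GenCompG S.EA S.CB S.Jt S.φ) (harch : S.EA.ArchimedeanEA)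
    (a q : E) (hq : q ∈ S.CB.P)
    (hall : ∀ b ∈ bicomm S.EA S.CB a, inC S.EA S.CB b q) :
    inC S.EA S.CB a q := by
  letI := og G
  have hq' := S.P_compl hq
  set D : G → G := fun y => S.Jt q y + S.Jt (S.EA.compl q) y with hD
  have hDadd : ∀ y z, D (y + z) = D y + D z := by
    intro y z
    simp only [hD]
    rw [S.Jt_add hq, S.Jt_add hq']
    abel
  have hDmono : ∀ {y z : G}, y ≤ z → D y ≤ D z :=
    fun h => add_le_add (S.Jt_mono hq h) (S.Jt_mono hq' h)
  have hDu : D S.u = S.u := (S.inCG_u hq).symm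
  have hfix : ∀ b ∈ bicomm S.EA S.CB a, D (S.φ b) = S.φ b :=
    fun b hb => ((S.inC_iff hq b).mp (hall b hb)).symm
  have hz : ∀ m : ℕ, m • (D (S.φ a) - S.φ a) ≤ S.u
      ∧ m • (-(D (S.φ a) - S.φ a)) ≤ S.u := by
    intro m
    rcases Nat.eq_zero_or_pos m with rfl | hm
    · constructor <;> (rw [zero_nsmul]; exact S.hu.1)
    · obtain ⟨qs, hqsbic, hlo, hhi⟩ := S.squeeze hgc a hm
      set s := ∑ k ∈ Finset.range m, S.φ (qs k) with hsdef
      have hDs : D s = s := by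
        rw [hsdef, addmap_sum hDadd]
        exact Finset.sum_congr rfl
          (fun k hk => hfix (qs k) (hqsbic k (Finset.mem_range.mp hk)))
      have hDx : m • D (S.φ a) = D (m • S.φ a) := (addmap_nsmul hDadd m _).symm
      constructor
      · rw [smul_sub]
        have h1 : m • D (S.φ a) ≤ s + S.u := by
          rw [hDx]
          calc D (m • S.φ a) ≤ D (s + S.u) := hDmono hhi
            _ = s + S.u := by rw [hDadd, hDs, hDu]
        calc m • D (S.φ a) - m • S.φ a ≤ (s + S.u) - m • S.φ a :=
              sub_le_sub_right h1 _
          _ ≤ (s + S.u) - s := sub_le_sub_left hlo _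
          _ = S.u := by abel
      · rw [smul_neg, smul_sub, neg_sub]
        have h2 : s ≤ m • D (S.φ a) := by
          rw [hDx]
          calc s = D s := hDs.symm
            _ ≤ D (m • S.φ a) := hDmono hlo
        calc m • S.φ a - m • D (S.φ a) ≤ (s + S.u) - m • D (S.φ a) :=
              sub_le_sub_right hhi _
          _ ≤ (s + S.u) - s := sub_le_sub_left h2 _
          _ = S.u := by abel
  have hz0 := S.zlem hgc harch hz
  have hfinal : S.φ a = D (S.φ a) := (sub_eq_zero.mp hz0).symm
  simp only [hD] at hfinal
  exact (S.inC_iff hq a).mpr hfinal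

lemma dir2 (harch : S.EA.ArchimedeanEA) (hgc : GenCompG S.EA S.CB S.Jt S.φ) :
    BComparability S.EA S.CB := by
  letI := og G
  have bellem : ∀ a : E, IsBElementWith S.EA S.CB a (bicomm S.EA S.CB a) := by
    intro a
    refine ⟨S.boolean_bic a, ?_⟩
    intro p hp
    constructor
    · intro hin b hb
      exact hb.2 p ⟨hp, hin⟩
    · intro hall
      exact S.belem_rev hgc harch a p hp hall
  refine ⟨fun a => ⟨_, bellem a⟩, ?_⟩
  intro e f hef
  obtain ⟨p, ⟨⟨hpP, hpg⟩, hbi⟩, hneg, hpos⟩ := hgc (S.φ f - S.φ e)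
  have hbicomm_e : ∀ b ∈ bicomm S.EA S.CB e, inC S.EA S.CB b p := by
    intro b hb
    have hbP := S.bic_P hb
    have hfb : inC S.EA S.CB f b := by
      refine ((bellem f).2 b hbP).mpr ?_
      intro c hc
      exact S.mackey_inC hbP (hef b hb c hc)
    have heb : inC S.EA S.CB e b := hb.1.2
    have hgb : inCG S.EA S.Jt (S.φ f - S.φ e) b :=
      S.inCG_sub hbP ((S.inCG_phi hbP f).mpr hfb) ((S.inCG_phi hbP e).mpr heb)
    have h2 := hbi b ⟨hbP, hgb⟩
    exact S.inC_symm hbP hpP ((S.inCG_phi hbP p).mp h2)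
  have hinCe : inC S.EA S.CB e p := ((bellem e).2 p hpP).mpr hbicomm_e
  have hbicomm_f : ∀ c ∈ bicomm S.EA S.CB f, inC S.EA S.CB c p := by
    intro c hc
    have hcP := S.bic_P hc
    have hec : inC S.EA S.CB e c := by
      refine ((bellem e).2 c hcP).mpr ?_
      intro b hb
      exact S.mackey_inC hcP (S.mackey_symm (hef b hb c hc))
    have hfc : inC S.EA S.CB f c := hc.1.2
    have hgc' : inCG S.EA S.Jt (S.φ f - S.φ e) c :=
      S.inCG_sub hcP ((S.inCG_phi hcP f).mpr hfc) ((S.inCG_phi hcP e).mpr hec)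
    have h2 := hbi c ⟨hcP, hgc'⟩
    exact S.inC_symm hcP hpP ((S.inCG_phi hcP p).mp h2)
  have hinCf : inC S.EA S.CB f p := ((bellem f).2 p hpP).mpr hbicomm_f
  have hall' : ∀ x ∈ PCset S.EA S.CB {e, f} ∪ ({e, f} : Set E),
      inC S.EA S.CB x p := by
    intro x hx
    simp only [Set.mem_union] at hx
    rcases hx with hx | hx
    · obtain ⟨hxP, hxin⟩ := hx
      have hxe : inC S.EA S.CB e x := hxin e (by simp)
      have hxf : inC S.EA S.CB f x := hxin f (by simp)
      have hgx : inCG S.EA S.Jt (S.φ f - S.φ e) x :=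
        S.inCG_sub hxP ((S.inCG_phi hxP f).mpr hxf) ((S.inCG_phi hxP e).mpr hxe)
      have h2 := hbi x ⟨hxP, hgx⟩
      exact S.inC_symm hxP hpP ((S.inCG_phi hxP p).mp h2)
    · simp only [Set.mem_insert_iff, Set.mem_singleton_iff] at hx
      rcases hx with rfl | rfl
      · exact hinCe
      · exact hinCf
  refine ⟨p, ⟨hpP, hall'⟩, ?_, ?_⟩
  · rw [S.le_iff]
    rw [S.Jt_sub hpP, S.Jt_phi hpP, S.Jt_phi hpP] at hpos
    exact sub_nonneg.mp hpos
  · rw [S.le_iff]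
    have hp'P := S.P_compl hpP
    rw [S.Jt_sub hp'P, S.Jt_phi hp'P, S.Jt_phi hp'P] at hneg
    exact sub_nonpos.mp hneg

end Ctx
end S17
open EffectAlgebra in
/-- for a divisible effect algebra `E` with universal group `(G,u)`
(represented by `φ : E ≅ [0,u]` with the universal extension property) and the uniquely
extended compression base `Jt`: if `E` has the b-comparability property then `G` has
general comparability; conversely, if `E` is archimedean and `G` has general
comparability, then `E` has the b-comparability property. -/
theorem statement17 {E : Type u} (EA : EffectAlgebra E) (CB : CompressionBase EA)
    (hdiv : ∀ a : E, ∀ n : ℕ, 0 < n → ∃! x : E, EA.nsmulE n x = some a)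
    {G : Type u} [AddCommGroup G] [PartialOrder G]
    [CovariantClass G G (· + ·) (· ≤ ·)]
    (u : G) (hu : OrderUnit u) (φ : E → G)
    (hφ1 : φ EA.one = u)
    (hmem : ∀ a : E, 0 ≤ φ a ∧ φ a ≤ u)
    (hinj : Function.Injective φ)
    (hsurj : ∀ g : G, 0 ≤ g → g ≤ u → ∃ a : E, φ a = g)
    (hpadd : ∀ a b : E, ∀ c : E,
      (EA.padd a b = some c ↔ φ a + φ b ≤ u ∧ φ c = φ a + φ b))
    (huniv : ∀ (H : Type u) [AddCommGroup H], ∀ ψ : E → H,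
      (∀ a b c : E, EA.padd a b = some c → ψ c = ψ a + ψ b) →
      ∃! h : G → H, (∀ x y : G, h (x + y) = h x + h y) ∧ ∀ a : E, h (φ a) = ψ a)
    (Jt : E → G → G)
    (hJt : ∀ p ∈ CB.P, (∀ x y : G, Jt p (x + y) = Jt p x + Jt p y) ∧
      (∀ x y : G, x ≤ y → Jt p x ≤ Jt p y) ∧
      ∀ a : E, Jt p (φ a) = φ (CB.J p a))
    :
    (BComparability EA CB → GenCompG EA CB Jt φ) ∧
    (EA.ArchimedeanEA → GenCompG EA CB Jt φ → BComparability EA CB) := by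
  letI S : S17.Ctx E G :=
    ⟨EA, CB, hdiv, u, hu, φ, hφ1, hmem, hinj, hsurj, hpadd, huniv, Jt, hJt⟩
  exact ⟨fun hbc => S.dir1 hbc, fun harch hgc => S.dir2 harch hgc⟩
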